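/- arXiv:1403.4696 — 2 statements merged into one kernel-verified Lean document; each statement's English description precedes it below -/
import Mathlib

section
/- Lemma 6 (bounded time until the upper sets empty or the minimum increases): under Assumption 1 and the γ/α setup, for any time k0 there exists a time k1 with k0 ≤ k1 ≤ k0 + n·(V(k0)/β + 1)·(1/(2δ) + 1)^{n−1} such that for all k ≥ k1, either X4(k) ∪ X5(k) ∪ X6(k) = ∅ or m(k) > m(k0); here δ = min over edges (p,q) of G of w_pq and β = min{γ, δ}. -/
open Finset Filter

/-- Assumption 1 on the weight matrix `W` relative to the graph `G`:
symmetric, nonnegative, rows sum to 1, diagonally dominant (`w_ii > 1/2`),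
respects the communication graph, and rational weights in `(0,1)` on edges. -/
def Assumption1 {n : ℕ} (G : SimpleGraph (Fin n)) (W : Matrix (Fin n) (Fin n) ℝ) : Prop :=
  (∀ i j, W i j = W j i) ∧
  (∀ i j, 0 ≤ W i j) ∧
  (∀ i, ∑ j, W i j = 1) ∧
  (∀ i, 1 / 2 < W i i) ∧
  (∀ i j, i ≠ j → ¬G.Adj i j → W i j = 0) ∧
  (∀ i j, G.Adj i j → (∃ q : ℚ, (q : ℝ) = W i j) ∧ 0 < W i j ∧ W i j < 1)

/-- The quantized system `x(k+1) = W ⌊x(k)⌋ + x(k) − ⌊x(k)⌋`, componentwise. -/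
def Traj {n : ℕ} (W : Matrix (Fin n) (Fin n) ℝ) (x : ℕ → Fin n → ℝ) : Prop :=
  ∀ k i, x (k + 1) i = (∑ j, W i j * (⌊x k j⌋ : ℝ)) + x k i - (⌊x k i⌋ : ℝ)

/-- `m(k) = min_i ⌊x_i(k)⌋`. -/
noncomputable def mfun {n : ℕ} (hn : 0 < n) (x : ℕ → Fin n → ℝ) (k : ℕ) : ℤ :=
  Finset.univ.inf' ⟨⟨0, hn⟩, Finset.mem_univ _⟩ fun i => ⌊x k i⌋

/-- `M(k) = max_i ⌊x_i(k)⌋`. -/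
noncomputable def Mfun {n : ℕ} (hn : 0 < n) (x : ℕ → Fin n → ℝ) (k : ℕ) : ℤ :=
  Finset.univ.sup' ⟨⟨0, hn⟩, Finset.mem_univ _⟩ fun i => ⌊x k i⌋

/-- The γ gap conditions (fractional part `c_i(k) = x_i(k) − ⌊x_i(k)⌋`). -/
def GammaSetup {n : ℕ} (W : Matrix (Fin n) (Fin n) ℝ) (x : ℕ → Fin n → ℝ) (γ : ℝ) : Prop :=
  0 < γ ∧
  ∀ i k,
    (x k i - (⌊x k i⌋ : ℝ) > 1 - W i i → x k i - (⌊x k i⌋ : ℝ) - (1 - W i i) ≥ 2 * γ) ∧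
    (1 - (x k i - (⌊x k i⌋ : ℝ)) > 1 - W i i →
      1 - (x k i - (⌊x k i⌋ : ℝ)) - (1 - W i i) ≥ 2 * γ) ∧
    1 - (x k i - (⌊x k i⌋ : ℝ)) ≥ 2 * γ ∧
    1 / 2 - (1 - W i i) ≥ 2 * γ

/-- `α_i = 1 − w_ii + γ`. -/
noncomputable def alpha {n : ℕ} (W : Matrix (Fin n) (Fin n) ℝ) (γ : ℝ) (i : Fin n) : ℝ :=
  1 - W i i + γ

/-- The Lyapunov function `V(k) = Σ_i max{|x_i(k) − m(k) − 1| − α_i, 0}`. -/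
noncomputable def Vfun {n : ℕ} (hn : 0 < n) (W : Matrix (Fin n) (Fin n) ℝ) (γ : ℝ)
    (x : ℕ → Fin n → ℝ) (k : ℕ) : ℝ :=
  ∑ i, max (|x k i - (mfun hn x k : ℝ) - 1| - alpha W γ i) 0

/-- `δ = min_{(p,q) ∈ E} w_pq`. -/
noncomputable def deltaMin {n : ℕ} (G : SimpleGraph (Fin n)) (W : Matrix (Fin n) (Fin n) ℝ) : ℝ :=
  sInf {r : ℝ | ∃ p q, G.Adj p q ∧ r = W p q}

open Classical in
/-- `T_s(k0,k)`: number of times `t ∈ [k0,k]` at which node `s` lies in `X1 ∪ X2`,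
i.e. `x_s(t) < m(t) + 1`. -/
noncomputable def Tcount {n : ℕ} (hn : 0 < n) (x : ℕ → Fin n → ℝ) (s : Fin n)
    (k0 k : ℕ) : ℕ :=
  ((Finset.Icc k0 k).filter fun t => x t s < (mfun hn x t : ℝ) + 1).card

set_option linter.unusedSectionVars false

namespace QL6

open scoped Classical

variable {n : ℕ}

/-- floor as a real -/
noncomputable def Yr (x : ℕ → Fin n → ℝ) (k : ℕ) (i : Fin n) : ℝ := (⌊x k i⌋ : ℝ)

/-- fractional part -/
noncomputable def cfr (x : ℕ → Fin n → ℝ) (k : ℕ) (i : Fin n) : ℝ := x k i - (⌊x k i⌋ : ℝ)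

noncomputable def Uf (W : Matrix (Fin n) (Fin n) ℝ) (x : ℕ → Fin n → ℝ) (k : ℕ) (i : Fin n) : ℝ :=
  ∑ j, W i j * max (Yr x k j - Yr x k i) 0

noncomputable def Df (W : Matrix (Fin n) (Fin n) ℝ) (x : ℕ → Fin n → ℝ) (k : ℕ) (i : Fin n) : ℝ :=
  ∑ j, W i j * max (Yr x k i - Yr x k j) 0

noncomputable def gfun (W : Matrix (Fin n) (Fin n) ℝ) (γ : ℝ) (M : ℤ) (i : Fin n) (t : ℝ) : ℝ :=
  max (t - (M : ℝ) - 1 - alpha W γ i) 0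

noncomputable def phiAt (W : Matrix (Fin n) (Fin n) ℝ) (γ : ℝ) (x : ℕ → Fin n → ℝ)
    (k : ℕ) (M : ℤ) : ℝ := ∑ i, gfun W γ M i (x k i)

section Basics

variable {G : SimpleGraph (Fin n)} {W : Matrix (Fin n) (Fin n) ℝ} {x : ℕ → Fin n → ℝ} {γ : ℝ}

lemma cfr_nonneg (i : Fin n) (k : ℕ) : 0 ≤ cfr x k i := by
  have := Int.floor_le (x k i); unfold cfr; linarith

lemma cfr_lt_one (i : Fin n) (k : ℕ) : cfr x k i < 1 := by
  have := Int.lt_floor_add_one (x k i); unfold cfr; linarith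

lemma x_eq_Y_add_c (k : ℕ) (i : Fin n) : x k i = Yr x k i + cfr x k i := by
  simp [Yr, cfr]

section withHyp
variable (hW : Assumption1 G W) (hγ : GammaSetup W x γ)

include hγ in
lemma gammapos : 0 < γ := hγ.1

include hγ in
lemma cfr_le (i : Fin n) (k : ℕ) : cfr x k i ≤ 1 - 2*γ := by
  have := (hγ.2 i k).2.2.1; simp only [cfr]; linarith

include hγ in
lemma Wii_ge (i : Fin n) : 1/2 + 2*γ ≤ W i i := by
  have := (hγ.2 i 0).2.2.2; linarith

include hW in
lemma Wnn (i j : Fin n) : 0 ≤ W i j := hW.2.1 i j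

include hW in
lemma Wsum (i : Fin n) : ∑ j, W i j = 1 := hW.2.2.1 i

include hW in
lemma Wle_one (i j : Fin n) : W i j ≤ 1 := by
  have h := hW.2.2.1 i
  have : W i j ≤ ∑ j', W i j' := Finset.single_le_sum (fun j' _ => hW.2.1 i j') (mem_univ j)
  linarith

include hW in
lemma Wsum_erase (i : Fin n) : ∑ j ∈ univ.erase i, W i j = 1 - W i i := by
  have := hW.2.2.1 i
  have h2 : ∑ j, W i j = W i i + ∑ j ∈ univ.erase i, W i j :=
    (Finset.add_sum_erase univ (W i) (mem_univ i)).symm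
  linarith

include hW hγ in
lemma alpha_le (i : Fin n) : alpha W γ i ≤ 1/2 - γ := by
  have := Wii_ge hγ i; simp [alpha]; linarith

include hγ in
include hW in
lemma alpha_ge (i : Fin n) : γ ≤ alpha W γ i := by
  have := Wle_one hW i i; simp [alpha]; linarith

end withHyp

end Basics

end QL6

namespace QL6
section Dyn
open Finset
variable {n : ℕ} {G : SimpleGraph (Fin n)} {W : Matrix (Fin n) (Fin n) ℝ}
  {x : ℕ → Fin n → ℝ} {γ : ℝ}

lemma max_sub_max (a b : ℝ) : max (a - b) 0 - max (b - a) 0 = a - b := by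
  rcases le_total a b with h | h
  · rw [max_eq_right (by linarith), max_eq_left (by linarith)]; ring
  · rw [max_eq_left (by linarith), max_eq_right (by linarith)]; ring

lemma xstep (hW : Assumption1 G W) (hx : Traj W x) (k : ℕ) (i : Fin n) :
    x (k+1) i = x k i + Uf W x k i - Df W x k i := by
  have h := hx k i
  have h2 : Uf W x k i - Df W x k i = (∑ j, W i j * Yr x k j) - Yr x k i := by
    have : Uf W x k i - Df W x k i = ∑ j, W i j * (Yr x k j - Yr x k i) := by
      rw [Uf, Df, ← Finset.sum_sub_distrib]
      exact Finset.sum_congr rfl fun j _ => by rw [← mul_sub, max_sub_max]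
    rw [this]
    have : ∑ j, W i j * (Yr x k j - Yr x k i)
        = (∑ j, W i j * Yr x k j) - (∑ j, W i j) * Yr x k i := by
      rw [Finset.sum_mul, ← Finset.sum_sub_distrib]
      exact Finset.sum_congr rfl fun j _ => by ring
    rw [this, Wsum hW]; ring
  unfold Yr at h2
  linarith

lemma Uf_nonneg (hW : Assumption1 G W) (k : ℕ) (i : Fin n) : 0 ≤ Uf W x k i :=
  Finset.sum_nonneg fun j _ => mul_nonneg (Wnn hW i j) (le_max_right _ _)

lemma Df_nonneg (hW : Assumption1 G W) (k : ℕ) (i : Fin n) : 0 ≤ Df W x k i :=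
  Finset.sum_nonneg fun j _ => mul_nonneg (Wnn hW i j) (le_max_right _ _)

variable (hn0 : 0 < n)

lemma m_le_floor (k : ℕ) (i : Fin n) : mfun hn0 x k ≤ ⌊x k i⌋ :=
  Finset.inf'_le _ (mem_univ i)

lemma m_le_x (k : ℕ) (i : Fin n) : (mfun hn0 x k : ℝ) ≤ x k i := by
  have h := m_le_floor (x := x) hn0 k i
  have := Int.floor_le (x k i)
  calc (mfun hn0 x k : ℝ) ≤ (⌊x k i⌋ : ℝ) := by exact_mod_cast h
    _ ≤ x k i := this

lemma exists_floor_eq_m (k : ℕ) : ∃ i, ⌊x k i⌋ = mfun hn0 x k := by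
  obtain ⟨i, _, h⟩ := Finset.exists_mem_eq_inf' (⟨⟨0, hn0⟩, Finset.mem_univ _⟩ :
    (Finset.univ : Finset (Fin n)).Nonempty) fun i => ⌊x k i⌋
  exact ⟨i, h.symm⟩

lemma x_next_ge (hW : Assumption1 G W) (hx : Traj W x) (k : ℕ) (i : Fin n) :
    (mfun hn0 x k : ℝ) ≤ x (k+1) i := by
  have h := hx k i
  have hsum : (mfun hn0 x k : ℝ) ≤ ∑ j, W i j * Yr x k j := by
    have h1 : ∀ j ∈ univ, W i j * (mfun hn0 x k : ℝ) ≤ W i j * Yr x k j := by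
      intro j _
      refine mul_le_mul_of_nonneg_left ?_ (Wnn hW i j)
      unfold Yr
      exact_mod_cast m_le_floor (x := x) hn0 k j
    have := Finset.sum_le_sum h1
    rw [← Finset.sum_mul, Wsum hW, one_mul] at this
    exact this
  have hc : 0 ≤ cfr x k i := cfr_nonneg i k
  unfold cfr at hc
  unfold Yr at hsum
  linarith

lemma m_mono (hW : Assumption1 G W) (hx : Traj W x) (k : ℕ) :
    mfun hn0 x k ≤ mfun hn0 x (k+1) := by
  refine Finset.le_inf' _ _ fun i _ => ?_
  exact Int.le_floor.2 (x_next_ge hn0 hW hx k i)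

lemma m_mono_le (hW : Assumption1 G W) (hx : Traj W x) {k k' : ℕ} (h : k ≤ k') :
    mfun hn0 x k ≤ mfun hn0 x k' := by
  induction h with
  | refl => exact le_refl _
  | step _ ih => exact le_trans ih (m_mono hn0 hW hx _)

end Dyn

section Delta
open Finset
variable {n : ℕ} {G : SimpleGraph (Fin n)} {W : Matrix (Fin n) (Fin n) ℝ} {γ : ℝ}
  {x : ℕ → Fin n → ℝ}

noncomputable def deltaMin' (G : SimpleGraph (Fin n)) (W : Matrix (Fin n) (Fin n) ℝ) : ℝ :=
  sInf {r : ℝ | ∃ p q, G.Adj p q ∧ r = W p q}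

lemma Sset_finite : {r : ℝ | ∃ p q, G.Adj p q ∧ r = W p q}.Finite := by
  apply Set.Finite.subset (Set.finite_range (fun pq : Fin n × Fin n => W pq.1 pq.2))
  rintro r ⟨p, q, _, rfl⟩
  exact ⟨(p, q), rfl⟩

lemma exists_edge (hG : G.Connected) (hn : 1 < n) : ∃ p q, G.Adj p q := by
  have hne : (⟨0, by omega⟩ : Fin n) ≠ ⟨1, hn⟩ := by
    intro h; simpa using congrArg Fin.val h
  obtain ⟨w⟩ := hG.preconnected ⟨0, by omega⟩ ⟨1, hn⟩
  rcases Nat.eq_zero_or_pos w.length with h0 | hpos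
  · exact absurd (w.eq_of_length_eq_zero h0) hne
  · have := w.adj_getVert_succ (i := 0) hpos
    exact ⟨_, _, this⟩

lemma delta_mem (hG : G.Connected) (hn : 1 < n) :
    ∃ p q, G.Adj p q ∧ deltaMin' G W = W p q := by
  obtain ⟨p, q, h⟩ := exists_edge hG hn
  have hne : {r : ℝ | ∃ p q, G.Adj p q ∧ r = W p q}.Nonempty := ⟨W p q, p, q, h, rfl⟩
  have := Set.Nonempty.csInf_mem hne Sset_finite
  exact this

lemma delta_pos (hW : Assumption1 G W) (hG : G.Connected) (hn : 1 < n) :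
    0 < deltaMin' G W := by
  obtain ⟨p, q, hadj, heq⟩ := delta_mem (W := W) hG hn
  rw [heq]; exact (hW.2.2.2.2.2 p q hadj).2.1

lemma delta_le_adj {p q : Fin n} (hadj : G.Adj p q) : deltaMin' G W ≤ W p q :=
  csInf_le Sset_finite.bddBelow ⟨p, q, hadj, rfl⟩

lemma sum_two_le (hW : Assumption1 G W) {i a b : Fin n} (hab : a ≠ b) (ha : a ≠ i) (hb : b ≠ i) :
    W i a + W i b ≤ 1 - W i i := by
  rw [← Wsum_erase hW]
  have hsub : ({a, b} : Finset (Fin n)) ⊆ univ.erase i := by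
    intro z hz; simp at hz; rcases hz with rfl | rfl <;> simp [ha, hb]
  have : ∑ j ∈ ({a, b} : Finset (Fin n)), W i j ≤ ∑ j ∈ univ.erase i, W i j :=
    Finset.sum_le_sum_of_subset_of_nonneg hsub (fun j _ _ => Wnn hW i j)
  rwa [Finset.sum_pair hab] at this

lemma adj_le (hW : Assumption1 G W) {p q : Fin n} (hadj : G.Adj p q) :
    W p q ≤ 1 - W p p := by
  rw [← Wsum_erase hW]
  refine Finset.single_le_sum (fun j _ => Wnn hW p j) ?_
  simp [hadj.ne']

lemma delta_le_half (hW : Assumption1 G W) (hγ : GammaSetup W x γ) (hG : G.Connected)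
    (hn : 1 < n) : deltaMin' G W ≤ 1/2 - 2*γ := by
  obtain ⟨p, q, hadj, heq⟩ := delta_mem (W := W) hG hn
  have h1 := adj_le hW hadj
  have h2 := Wii_ge hγ p
  rw [heq]; linarith

/-- along any walk ending at p, starting outside {p,q}, some vertex has two distinct nbrs -/
lemma walk_two_nbrs :
    ∀ {c d : Fin n} (_ : G.Walk c d) (p q : Fin n), G.Adj p q → d = p → c ≠ p → c ≠ q →
    ∃ z a b, a ≠ b ∧ G.Adj z a ∧ G.Adj z b := by
  intro c d w
  induction w with
  | nil => intro p q _ hdp hcp _; exact absurd hdp hcp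
  | @cons u v e hadj t ih =>
    intro p q hpq hdp hup huq
    by_cases hv : v = p ∨ v = q
    · rcases hv with rfl | rfl
      · exact ⟨v, u, q, huq, hadj.symm, hpq⟩
      · exact ⟨v, u, p, hup, hadj.symm, hpq.symm⟩
    · push_neg at hv
      exact ih p q hpq hdp hv.1 hv.2

lemma exists_deg_two (hG : G.Connected) (hn : 3 ≤ n) :
    ∃ z a b, a ≠ b ∧ G.Adj z a ∧ G.Adj z b := by
  obtain ⟨p, q, hpq⟩ := exists_edge hG (by omega)
  have hex : ∃ c, c ∉ ({p, q} : Finset (Fin n)) := by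
    by_contra hno; push_neg at hno
    have hsub : (univ : Finset (Fin n)) ⊆ {p, q} := fun z _ => hno z
    have h1 := Finset.card_le_card hsub
    have h2 : ({p, q} : Finset (Fin n)).card ≤ 2 :=
      (Finset.card_insert_le _ _).trans (by simp)
    rw [Finset.card_univ, Fintype.card_fin] at h1
    omega
  obtain ⟨c, hc⟩ := hex
  simp only [Finset.mem_insert, Finset.mem_singleton, not_or] at hc
  obtain ⟨w⟩ := hG.preconnected c p
  exact walk_two_nbrs w p q hpq rfl hc.1 hc.2

lemma delta_le_quarter (hW : Assumption1 G W) (hγ : GammaSetup W x γ) (hG : G.Connected)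
    (hn : 3 ≤ n) : 2 * deltaMin' G W ≤ 1/2 - 2*γ := by
  obtain ⟨z, a, b, hab, hza, hzb⟩ := exists_deg_two hG hn
  have h1 := delta_le_adj (W := W) hza
  have h2 := delta_le_adj (W := W) hzb
  have h3 := sum_two_le hW hab hza.ne' hzb.ne'
  have h4 := Wii_ge hγ z
  linarith

end Delta
end QL6
namespace QL6
section OneStep
open Finset
variable {n : ℕ} {G : SimpleGraph (Fin n)} {W : Matrix (Fin n) (Fin n) ℝ}
  {x : ℕ → Fin n → ℝ} {γ : ℝ}

noncomputable def lw (W : Matrix (Fin n) (Fin n) ℝ) (x : ℕ → Fin n → ℝ) (k : ℕ) (M : ℤ)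
    (i : Fin n) : ℝ := ∑ j, (if ⌊x k j⌋ = M then W i j else 0)

noncomputable def mw (W : Matrix (Fin n) (Fin n) ℝ) (x : ℕ → Fin n → ℝ) (k : ℕ) (M : ℤ)
    (i : Fin n) : ℝ := ∑ j, (if ⌊x k j⌋ = M + 1 then W i j else 0)

noncomputable def wb (W : Matrix (Fin n) (Fin n) ℝ) (x : ℕ → Fin n → ℝ) (k : ℕ) (M : ℤ)
    (i : Fin n) : ℝ := ∑ j, (if M + 2 ≤ ⌊x k j⌋ then W i j else 0)

noncomputable def uh (W : Matrix (Fin n) (Fin n) ℝ) (x : ℕ → Fin n → ℝ) (k : ℕ) (M : ℤ)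
    (i : Fin n) : ℝ := ∑ j, (if M + 2 ≤ ⌊x k j⌋ then W i j * (Yr x k j - (M : ℝ)) else 0)

noncomputable def tau (W : Matrix (Fin n) (Fin n) ℝ) (x : ℕ → Fin n → ℝ) (k : ℕ) (M : ℤ)
    (i j : Fin n) : ℝ :=
  if ⌊x k i⌋ = M then (if M + 1 ≤ ⌊x k j⌋ then -(W i j) else 0)
  else (if ⌊x k j⌋ = M then W i j else 0)

noncomputable def eb (W : Matrix (Fin n) (Fin n) ℝ) (γ : ℝ) (x : ℕ → Fin n → ℝ) (k : ℕ)
    (M : ℤ) (i : Fin n) : ℝ :=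
  if ⌊x k i⌋ = M then -(mw W x k M i + min (uh W x k M i) (wb W x k M i + 3*γ))
  else if ⌊x k i⌋ = M + 1 then
    (if cfr x k i ≤ alpha W γ i then Df W x k i - min (Uf W x k i) (Df W x k i + γ)
     else Df W x k i - min (Df W x k i) (Uf W x k i + (cfr x k i - alpha W γ i)))
  else max (Df W x k i - Uf W x k i - (x k i - (M:ℝ) - 1 - alpha W γ i)) 0

noncomputable def pen (W : Matrix (Fin n) (Fin n) ℝ) (γ : ℝ) (x : ℕ → Fin n → ℝ) (k : ℕ)
    (M : ℤ) (i : Fin n) : ℝ :=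
  if ⌊x k i⌋ = M then min (wb W x k M i) (3*γ)
  else if ⌊x k i⌋ = M + 1 then
    (if cfr x k i ≤ alpha W γ i then min (Uf W x k i) (Df W x k i + γ)
     else min (Df W x k i) (Uf W x k i + (cfr x k i - alpha W γ i)))
  else 0

section PtLemmas
variable {k : ℕ} {M : ℤ}

lemma idA (a t : ℝ) : max (a - t) 0 = a - min a t := by
  rcases le_total a t with h | h
  · rw [max_eq_right (by linarith), min_eq_left h]; ring
  · rw [max_eq_left (by linarith), min_eq_right h]

lemma idB (f u d : ℝ) : max (f + u - d) 0 = f + u - min d (u + f) := by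
  rcases le_total d (u + f) with h | h
  · rw [max_eq_left (by linarith), min_eq_left h]
  · rw [max_eq_right (by linarith), min_eq_right h]; ring

lemma idC (a : ℝ) : max a 0 = a + max (-a) 0 := by
  rcases le_total a 0 with h | h
  · rw [max_eq_right h, max_eq_left (by linarith)]; ring
  · rw [max_eq_left h, max_eq_right (by linarith)]; ring

variable (hM : ∀ i, M ≤ ⌊x k i⌋)

lemma lw_nonneg (hW : Assumption1 G W) (i : Fin n) : 0 ≤ lw W x k M i :=
  Finset.sum_nonneg fun j _ => by by_cases h : ⌊x k j⌋ = M <;> simp [h, Wnn hW i j]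

lemma mw_nonneg (hW : Assumption1 G W) (i : Fin n) : 0 ≤ mw W x k M i :=
  Finset.sum_nonneg fun j _ => by by_cases h : ⌊x k j⌋ = M + 1 <;> simp [h, Wnn hW i j]

lemma wb_nonneg (hW : Assumption1 G W) (i : Fin n) : 0 ≤ wb W x k M i :=
  Finset.sum_nonneg fun j _ => by by_cases h : M + 2 ≤ ⌊x k j⌋ <;> simp [h, Wnn hW i j]

include hM in
lemma Df_L {i : Fin n} (hL : ⌊x k i⌋ = M) : Df W x k i = 0 := by
  refine Finset.sum_eq_zero fun j _ => ?_
  have h1 : Yr x k i - Yr x k j ≤ 0 := by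
    have h2 := hM j; unfold Yr; rw [hL]
    have : (M : ℝ) ≤ (⌊x k j⌋ : ℝ) := by exact_mod_cast h2
    linarith
  rw [max_eq_right h1, mul_zero]

include hM in
lemma Uf_L {i : Fin n} (hL : ⌊x k i⌋ = M) : Uf W x k i = mw W x k M i + uh W x k M i := by
  rw [Uf, mw, uh, ← Finset.sum_add_distrib]
  refine Finset.sum_congr rfl fun j _ => ?_
  have e1 : (M:ℤ) ≠ M + 1 := by omega
  have e2 : ¬((M:ℤ) + 2 ≤ M) := by omega
  have e3 : ¬((M:ℤ) + 2 ≤ M + 1) := by omega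
  rcases (show ⌊x k j⌋ = M ∨ ⌊x k j⌋ = M + 1 ∨ M + 2 ≤ ⌊x k j⌋ by have := hM j; omega)
    with h | h | h
  · have hy : Yr x k j - Yr x k i = 0 := by unfold Yr; rw [hL, h]; ring
    rw [hy, h]
    simp [e1, e2]
  · have hy : Yr x k j - Yr x k i = 1 := by
      unfold Yr; rw [hL, h]; push_cast; ring
    rw [hy, h]
    simp [e1.symm, e3]
  · have h2 : Yr x k j - Yr x k i = Yr x k j - (M:ℝ) := by unfold Yr; rw [hL]
    have h3 : (2:ℝ) ≤ Yr x k j - (M:ℝ) := by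
      unfold Yr
      have : ((M:ℝ) + 2) ≤ (⌊x k j⌋ : ℝ) := by exact_mod_cast h
      linarith
    have hne2 : ⌊x k j⌋ ≠ M + 1 := by omega
    rw [h2, max_eq_left (by linarith)]
    simp [show ⌊x k j⌋ ≠ M by omega, hne2, h]

include hM in
lemma Df_mid {i : Fin n} (hm : ⌊x k i⌋ = M + 1) : Df W x k i = lw W x k M i := by
  rw [Df, lw]
  refine Finset.sum_congr rfl fun j _ => ?_
  rcases (show ⌊x k j⌋ = M ∨ ⌊x k j⌋ = M + 1 ∨ M + 2 ≤ ⌊x k j⌋ by have := hM j; omega)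
    with h | h | h
  · have hy : Yr x k i - Yr x k j = 1 := by unfold Yr; rw [hm, h]; push_cast; ring
    rw [hy]; simp [h]
  · have hy : Yr x k i - Yr x k j = 0 := by unfold Yr; rw [hm, h]; ring
    rw [hy]; simp [h, show M + 1 ≠ M by omega]
  · have h1 : Yr x k i - Yr x k j ≤ 0 := by
      unfold Yr; rw [hm]
      have : ((M:ℝ) + 2) ≤ (⌊x k j⌋ : ℝ) := by exact_mod_cast h
      push_cast; linarith
    rw [max_eq_right h1, mul_zero]
    simp [show ⌊x k j⌋ ≠ M by omega]

lemma sum_if_ne (hW : Assumption1 G W) (i : Fin n) :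
    ∑ j, (if j = i then (0:ℝ) else W i j) = 1 - W i i := by
  have h : ∑ j, (if j = i then (0:ℝ) else W i j)
      = (∑ j, W i j) - ∑ j, (if j = i then W i j else 0) := by
    rw [← Finset.sum_sub_distrib]
    exact Finset.sum_congr rfl fun j _ => by by_cases h : j = i <;> simp [h]
  rw [h, Wsum hW, Finset.sum_ite_eq' univ i (W i), if_pos (mem_univ i)]

lemma mw_add_wb_le {i : Fin n} (hW : Assumption1 G W) (hL : ⌊x k i⌋ = M) :
    mw W x k M i + wb W x k M i ≤ 1 - W i i := by
  rw [← sum_if_ne hW i, mw, wb, ← Finset.sum_add_distrib]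
  refine Finset.sum_le_sum fun j _ => ?_
  by_cases hj : j = i
  · subst hj
    have h1 : ⌊x k j⌋ ≠ M + 1 := by omega
    have h2 : ¬(M+2 ≤ ⌊x k j⌋) := by omega
    simp [h1, h2]
  · have hw := Wnn hW i j
    by_cases a : ⌊x k j⌋ = M + 1
    · have b : ¬(M+2 ≤ ⌊x k j⌋) := by omega
      simp [a, b, hj]
    · by_cases b : M + 2 ≤ ⌊x k j⌋ <;> simp [a, b, hj] <;> linarith

lemma lw_add_mw_le {i : Fin n} (hW : Assumption1 G W) (hH : ⌊x k i⌋ = M + 2) :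
    lw W x k M i + mw W x k M i ≤ 1 - W i i := by
  rw [← sum_if_ne hW i, lw, mw, ← Finset.sum_add_distrib]
  refine Finset.sum_le_sum fun j _ => ?_
  by_cases hj : j = i
  · subst hj
    have h1 : ⌊x k j⌋ ≠ M := by omega
    have h2 : ⌊x k j⌋ ≠ M + 1 := by omega
    simp [h1, h2]
  · have hw := Wnn hW i j
    by_cases a : ⌊x k j⌋ = M
    · have b : ⌊x k j⌋ ≠ M + 1 := by omega
      simp [a, b, hj]
    · by_cases b : ⌊x k j⌋ = M + 1 <;> simp [a, b, hj] <;> linarith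

include hM in
lemma Df_H2eq {i : Fin n} (hH : ⌊x k i⌋ = M + 2) :
    Df W x k i = 2 * lw W x k M i + mw W x k M i := by
  have : Df W x k i = ∑ j, ((2:ℝ) * (if ⌊x k j⌋ = M then W i j else 0)
      + (if ⌊x k j⌋ = M + 1 then W i j else 0)) := by
    rw [Df]
    refine Finset.sum_congr rfl fun j _ => ?_
    rcases (show ⌊x k j⌋ = M ∨ ⌊x k j⌋ = M + 1 ∨ M + 2 ≤ ⌊x k j⌋ by have := hM j; omega)
      with h | h | h
    · have hy : Yr x k i - Yr x k j = 2 := by unfold Yr; rw [hH, h]; push_cast; ring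
      rw [hy, max_eq_left (by norm_num)]
      simp [h, show M ≠ M + 1 by omega]; ring
    · have hy : Yr x k i - Yr x k j = 1 := by unfold Yr; rw [hH, h]; push_cast; ring
      rw [hy, max_eq_left (by norm_num)]
      simp [h, show M + 1 ≠ M by omega]
    · have h1 : Yr x k i - Yr x k j ≤ 0 := by
        unfold Yr; rw [hH]
        have h2 : ((M:ℝ) + 2) ≤ (⌊x k j⌋ : ℝ) := by exact_mod_cast h
        push_cast; linarith
      rw [max_eq_right h1, mul_zero]
      simp [show ⌊x k j⌋ ≠ M by omega, show ⌊x k j⌋ ≠ M + 1 by omega]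
  rw [this, Finset.sum_add_distrib, ← Finset.mul_sum, lw, mw]

include hM in
lemma Df_H3le {i : Fin n} (hW : Assumption1 G W) (hH : M + 3 ≤ ⌊x k i⌋) :
    Df W x k i ≤ (1 - W i i) * (Yr x k i - (M:ℝ)) := by
  have hkey : Df W x k i ≤ ∑ j, (if j = i then (0:ℝ) else W i j) * (Yr x k i - (M:ℝ)) := by
    rw [Df]
    refine Finset.sum_le_sum fun j _ => ?_
    by_cases hj : j = i
    · subst hj; simp
    · simp only [hj, if_neg, if_false]
      refine mul_le_mul_of_nonneg_left ?_ (Wnn hW i j)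
      have h2 : (M : ℝ) ≤ (⌊x k j⌋ : ℝ) := by exact_mod_cast hM j
      refine max_le ?_ ?_
      · unfold Yr; linarith
      · unfold Yr
        have : ((M:ℝ) + 3) ≤ (⌊x k i⌋ : ℝ) := by exact_mod_cast hH
        linarith
  rw [← Finset.sum_mul, sum_if_ne hW i] at hkey
  exact hkey

include hM in
lemma uh_ge {i : Fin n} (hW : Assumption1 G W) : 2 * wb W x k M i ≤ uh W x k M i := by
  rw [wb, uh, Finset.mul_sum]
  refine Finset.sum_le_sum fun j _ => ?_
  by_cases h : M + 2 ≤ ⌊x k j⌋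
  · simp only [h, if_true]
    have h3 : (2:ℝ) ≤ Yr x k j - (M:ℝ) := by
      unfold Yr
      have : ((M:ℝ) + 2) ≤ (⌊x k j⌋ : ℝ) := by exact_mod_cast h
      linarith
    have := Wnn hW i j
    nlinarith
  · simp [h]

include hM in
lemma uh_nonneg (hW : Assumption1 G W) (i : Fin n) :
    0 ≤ uh W x k M i := le_trans (by linarith [wb_nonneg (x := x) (k := k) (M := M) hW i]) (uh_ge hM hW)

end PtLemmas
end OneStep
end QL6
namespace QL6
section Assembly
open Finset
variable {n : ℕ} {G : SimpleGraph (Fin n)} {W : Matrix (Fin n) (Fin n) ℝ}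
  {x : ℕ → Fin n → ℝ} {γ : ℝ} {k : ℕ} {M : ℤ}

variable (hW : Assumption1 G W) (hx : Traj W x) (hγ : GammaSetup W x γ)
  (hM : ∀ i, M ≤ ⌊x k i⌋)

include hW hγ hM in
lemma x3_gap {i : Fin n} (hm : ⌊x k i⌋ = M + 1) (hc : cfr x k i ≤ alpha W γ i) :
    cfr x k i - alpha W γ i ≤ -γ := by
  have hγ0 := hγ.1
  by_cases hcw : x k i - (⌊x k i⌋ : ℝ) ≤ 1 - W i i
  · unfold cfr alpha; linarith
  · push_neg at hcw
    have := (hγ.2 i k).1 hcw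
    unfold cfr alpha at *
    linarith

include hW hγ hM in
lemma x4_gap {i : Fin n} (hm : ⌊x k i⌋ = M + 1) (hc : ¬ cfr x k i ≤ alpha W γ i) :
    γ ≤ cfr x k i - alpha W γ i := by
  push_neg at hc
  have hγ0 := hγ.1
  have hcw : x k i - (⌊x k i⌋ : ℝ) > 1 - W i i := by
    unfold cfr alpha at hc; linarith
  have := (hγ.2 i k).1 hcw
  unfold cfr alpha at *
  linarith

include hW hx hγ hM in
lemma pernode (i : Fin n) :
    gfun W γ M i (x (k+1) i) ≤ gfun W γ M i (x k i)
      + (Uf W x k i - Df W x k i) + eb W γ x k M i := by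
  have hγ0 := hγ.1
  have hx' : x (k+1) i = x k i + Uf W x k i - Df W x k i := xstep hW hx k i
  have hxc : x k i = (⌊x k i⌋ : ℝ) + cfr x k i := by unfold cfr; ring
  have hαγ : γ ≤ alpha W γ i := alpha_ge hW hγ i
  rcases (show ⌊x k i⌋ = M ∨ ⌊x k i⌋ = M + 1 ∨ M + 2 ≤ ⌊x k i⌋ by have := hM i; omega)
    with hL | hm | hh
  · -- L node
    have hD : Df W x k i = 0 := Df_L hM hL
    have hU : Uf W x k i = mw W x k M i + uh W x k M i := Uf_L hM hL
    have hxM : x k i = (M:ℝ) + cfr x k i := by rw [hxc, hL]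
    have hg0 : gfun W γ M i (x k i) = 0 := by
      rw [gfun, max_eq_right]
      have := cfr_lt_one (x := x) i k
      rw [hxM]; linarith
    rw [gfun, eb, if_pos hL, hg0, hD, hU]
    have key : uh W x k M i - min (uh W x k M i) (wb W x k M i + 3*γ)
        = max (uh W x k M i - (wb W x k M i + 3*γ)) 0 := (idA _ _).symm
    have hmwwb := mw_add_wb_le (x := x) (k := k) (M := M) hW hL
    have hcle := cfr_le hγ i k
    calc max (x (k+1) i - (M:ℝ) - 1 - alpha W γ i) 0
        ≤ max (uh W x k M i - (wb W x k M i + 3*γ)) 0 := by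
          refine max_le_max ?_ (le_refl 0)
          rw [hx', hD, hU, hxM]
          unfold alpha
          linarith
      _ = 0 + (mw W x k M i + uh W x k M i - 0)
            + -(mw W x k M i + min (uh W x k M i) (wb W x k M i + 3*γ)) := by
          rw [← key]; ring
  · -- mid node
    have hxM : x k i = (M:ℝ) + 1 + cfr x k i := by
      rw [hxc, hm]; push_cast; ring
    have hgx : gfun W γ M i (x k i) = max (cfr x k i - alpha W γ i) 0 := by
      rw [gfun, hxM]; ring_nf
    have hgx' : gfun W γ M i (x (k+1) i)
        = max (cfr x k i + (Uf W x k i - Df W x k i) - alpha W γ i) 0 := by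
      rw [gfun, hx', hxM]; ring_nf
    rw [eb, if_neg (by omega), if_pos hm]
    by_cases hc : cfr x k i ≤ alpha W γ i
    · rw [if_pos hc]
      have hcγ := x3_gap hW hγ hM hm hc
      have hg0 : gfun W γ M i (x k i) = 0 := by
        rw [hgx, max_eq_right (by linarith)]
      rw [hgx', hg0]
      have key : Uf W x k i - min (Uf W x k i) (Df W x k i + γ)
          = max (Uf W x k i - (Df W x k i + γ)) 0 := (idA _ _).symm
      calc max (cfr x k i + (Uf W x k i - Df W x k i) - alpha W γ i) 0
          ≤ max (Uf W x k i - (Df W x k i + γ)) 0 := by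
            refine max_le_max ?_ (le_refl 0); linarith
        _ = 0 + (Uf W x k i - Df W x k i)
              + (Df W x k i - min (Uf W x k i) (Df W x k i + γ)) := by
            rw [← key]; ring
    · rw [if_neg hc]
      have hfγ := x4_gap hW hγ hM hm hc
      push_neg at hc
      have hgf : gfun W γ M i (x k i) = cfr x k i - alpha W γ i := by
        rw [hgx, max_eq_left (by linarith)]
      rw [hgx', hgf]
      have key := idB (cfr x k i - alpha W γ i) (Uf W x k i) (Df W x k i)
      have : max (cfr x k i + (Uf W x k i - Df W x k i) - alpha W γ i) 0
          = max (cfr x k i - alpha W γ i + Uf W x k i - Df W x k i) 0 := by ring_nf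
      rw [this, key]; ring_nf
      try exact le_refl _
  · -- H2 node
    have hf : (0:ℝ) ≤ x k i - (M:ℝ) - 1 - alpha W γ i := by
      have h1 : ((M:ℝ) + 2) ≤ (⌊x k i⌋ : ℝ) := by exact_mod_cast hh
      have h2 := Int.floor_le (x k i)
      have h3 := alpha_le hW hγ i
      linarith
    have hgf : gfun W γ M i (x k i) = x k i - (M:ℝ) - 1 - alpha W γ i := by
      rw [gfun, max_eq_left hf]
    rw [eb, if_neg (by omega), if_neg (by omega), hgf, gfun]
    have h1 : x (k+1) i - (M:ℝ) - 1 - alpha W γ i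
        = (x k i - (M:ℝ) - 1 - alpha W γ i) + (Uf W x k i - Df W x k i) := by
      rw [hx']; ring
    rw [h1, idC ((x k i - (M:ℝ) - 1 - alpha W γ i) + (Uf W x k i - Df W x k i))]
    have h2 : -((x k i - (M:ℝ) - 1 - alpha W γ i) + (Uf W x k i - Df W x k i))
        = Df W x k i - Uf W x k i - (x k i - (M:ℝ) - 1 - alpha W γ i) := by ring
    rw [h2]

include hW hM in
lemma tau_sum_L {i : Fin n} (hL : ⌊x k i⌋ = M) :
    ∑ j, tau W x k M i j = -(mw W x k M i + wb W x k M i) := by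
  rw [mw, wb, ← Finset.sum_add_distrib, ← Finset.sum_neg_distrib]
  refine Finset.sum_congr rfl fun j _ => ?_
  rw [tau, if_pos hL]
  rcases (show ⌊x k j⌋ = M ∨ ⌊x k j⌋ = M + 1 ∨ M + 2 ≤ ⌊x k j⌋ by have := hM j; omega)
    with h | h | h
  · simp [h]
  · simp [h]
  · have h1 : M + 1 ≤ ⌊x k j⌋ := by omega
    by_cases h3 : ⌊x k j⌋ = M + 1
    · omega
    · simp [h1, h3, h]

lemma tau_sum_nonL {i : Fin n} (hnL : ⌊x k i⌋ ≠ M) :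
    ∑ j, tau W x k M i j = lw W x k M i := by
  rw [lw]
  exact Finset.sum_congr rfl fun j _ => by rw [tau, if_neg hnL]

include hW hγ hM in
lemma claimA (i : Fin n) :
    eb W γ x k M i + pen W γ x k M i ≤ ∑ j, tau W x k M i j := by
  have hγ0 := hγ.1
  rcases (show ⌊x k i⌋ = M ∨ ⌊x k i⌋ = M + 1 ∨ M + 2 ≤ ⌊x k i⌋ by have := hM i; omega)
    with hL | hm | hh
  · rw [tau_sum_L hW hM hL, eb, pen, if_pos hL, if_pos hL]
    have huh := uh_ge (x := x) (k := k) (M := M) hM hW (i := i)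
    have hwb := wb_nonneg (x := x) (k := k) (M := M) hW i
    have hkey : wb W x k M i + min (wb W x k M i) (3*γ)
        ≤ min (uh W x k M i) (wb W x k M i + 3*γ) := by
      refine le_min ?_ ?_
      · have := min_le_left (wb W x k M i) (3*γ); linarith
      · have := min_le_right (wb W x k M i) (3*γ); linarith
    linarith
  · have hne : ⌊x k i⌋ ≠ M := by omega
    rw [tau_sum_nonL hne, eb, pen, if_neg hne, if_neg hne, if_pos hm, if_pos hm,
      ← Df_mid hM hm]
    by_cases hc : cfr x k i ≤ alpha W γ i
    · rw [if_pos hc, if_pos hc]; ring_nf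
      try exact le_refl _
    · rw [if_neg hc, if_neg hc]; ring_nf
      try exact le_refl _
  · have hne : ⌊x k i⌋ ≠ M := by omega
    have hne2 : ⌊x k i⌋ ≠ M + 1 := by omega
    rw [tau_sum_nonL hne, eb, pen, if_neg hne, if_neg hne, if_neg hne2, if_neg hne2,
      add_zero]
    have hlw := lw_nonneg (x := x) (k := k) (M := M) hW i
    have hU := Uf_nonneg (x := x) hW k i
    have hc0 := cfr_nonneg (x := x) i k
    have hxc : x k i = (⌊x k i⌋ : ℝ) + cfr x k i := by unfold cfr; ring
    have hWii := Wii_ge hγ i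
    rcases (show ⌊x k i⌋ = M + 2 ∨ M + 3 ≤ ⌊x k i⌋ by omega) with h2 | h3
    · have hD := Df_H2eq (W := W) (x := x) hM h2
      have hlwmw := lw_add_mw_le (x := x) (k := k) (M := M) hW h2
      refine max_le ?_ hlw
      rw [hD]
      have hxM : x k i = (M:ℝ) + 2 + cfr x k i := by
        rw [hxc, h2]; push_cast; ring
      rw [hxM]
      unfold alpha
      linarith
    · have hD := Df_H3le (W := W) (x := x) hM hW h3
      refine max_le ?_ hlw
      have hq : (3:ℝ) ≤ Yr x k i - (M:ℝ) := by
        unfold Yr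
        have : ((M:ℝ) + 3) ≤ (⌊x k i⌋ : ℝ) := by exact_mod_cast h3
        linarith
      have hxY : Yr x k i ≤ x k i := Int.floor_le (x k i)
      have hα := alpha_le hW hγ i
      have hWle := Wle_one hW i i
      -- D - U - f ≤ (1-Wii) q - (q - 1 - α) = -Wii q + 1 + α ≤ -3/2 + 1 + 1/2 - γ < 0
      have : W i i * (Yr x k i - (M:ℝ)) ≥ (1/2 + 2*γ) * 3 := by
        have h12 : (0:ℝ) < 1/2 + 2*γ := by linarith
        calc W i i * (Yr x k i - (M:ℝ)) ≥ (1/2 + 2*γ) * (Yr x k i - (M:ℝ)) := by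
              refine mul_le_mul_of_nonneg_right hWii (by linarith)
          _ ≥ (1/2 + 2*γ) * 3 := by nlinarith
      unfold Yr at *
      nlinarith
end Assembly
end QL6
namespace QL6
section Assembly2
open Finset
variable {n : ℕ} {G : SimpleGraph (Fin n)} {W : Matrix (Fin n) (Fin n) ℝ}
  {x : ℕ → Fin n → ℝ} {γ : ℝ} {k : ℕ} {M : ℤ}

variable (hW : Assumption1 G W) (hx : Traj W x) (hγ : GammaSetup W x γ)
  (hM : ∀ i, M ≤ ⌊x k i⌋)

include hW hM in
lemma tau_anti (i j : Fin n) : tau W x k M j i = - tau W x k M i j := by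
  have hsym := hW.1 i j
  by_cases hi : ⌊x k i⌋ = M <;> by_cases hj : ⌊x k j⌋ = M
  · have h1 : ¬(M + 1 ≤ ⌊x k i⌋) := by omega
    have h2 : ¬(M + 1 ≤ ⌊x k j⌋) := by omega
    simp [tau, hi, hj, h1, h2]
  · have h2 : M + 1 ≤ ⌊x k j⌋ := by have := hM j; omega
    simp [tau, hi, hj, h2, hsym]
  · have h1 : M + 1 ≤ ⌊x k i⌋ := by have := hM i; omega
    simp [tau, hi, hj, h1, hsym]
  · simp [tau, hi, hj]

include hW hM in
lemma sum_tau_zero : ∑ i, ∑ j, tau W x k M i j = 0 := by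
  have h1 : ∑ i, ∑ j, tau W x k M i j = ∑ j, ∑ i, tau W x k M i j := Finset.sum_comm
  have h2 : ∑ j, ∑ i, tau W x k M i j = - ∑ j, ∑ i, tau W x k M j i := by
    rw [← Finset.sum_neg_distrib]
    refine Finset.sum_congr rfl fun j _ => ?_
    rw [← Finset.sum_neg_distrib]
    exact Finset.sum_congr rfl fun i _ => by rw [tau_anti hW hM i j]; ring
  have h3 : ∑ j, ∑ i, tau W x k M j i = ∑ i, ∑ j, tau W x k M i j := rfl
  rw [h3] at h2
  rw [h1] at *
  linarith

include hW in
lemma sum_U_eq_sum_D : ∑ i, Uf W x k i = ∑ i, Df W x k i := by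
  calc ∑ i, Uf W x k i
      = ∑ j, ∑ i, W i j * max (Yr x k j - Yr x k i) 0 := Finset.sum_comm
    _ = ∑ i, Df W x k i := by
        refine Finset.sum_congr rfl fun j _ => ?_
        rw [Df]
        exact Finset.sum_congr rfl fun i _ => by rw [hW.1 i j]

include hW hγ hM in
lemma pen_nonneg (i : Fin n) : 0 ≤ pen W γ x k M i := by
  have hγ0 := hγ.1
  rw [pen]
  rcases (show ⌊x k i⌋ = M ∨ ⌊x k i⌋ = M + 1 ∨ M + 2 ≤ ⌊x k i⌋ by have := hM i; omega)
    with hL | hm | hh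
  · rw [if_pos hL]
    exact le_min (wb_nonneg hW i) (by linarith)
  · rw [if_neg (by omega), if_pos hm]
    by_cases hc : cfr x k i ≤ alpha W γ i
    · rw [if_pos hc]
      exact le_min (Uf_nonneg hW k i) (by linarith [Df_nonneg (x := x) hW k i])
    · rw [if_neg hc]
      push_neg at hc
      exact le_min (Df_nonneg hW k i) (by linarith [Uf_nonneg (x := x) hW k i])
  · rw [if_neg (by omega), if_neg (by omega)]

include hW hx hγ hM in
lemma phi_decr : phiAt W γ x (k+1) M ≤ phiAt W γ x k M - ∑ i, pen W γ x k M i := by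
  have h1 : phiAt W γ x (k+1) M ≤ phiAt W γ x k M
      + (∑ i, (Uf W x k i - Df W x k i)) + ∑ i, (eb W γ x k M i) := by
    rw [phiAt, phiAt, ← Finset.sum_add_distrib, ← Finset.sum_add_distrib]
    exact Finset.sum_le_sum fun i _ => pernode hW hx hγ hM i
  have h2 : ∑ i, (Uf W x k i - Df W x k i) = 0 := by
    rw [Finset.sum_sub_distrib, sum_U_eq_sum_D hW]; ring
  have h3 : ∑ i, (eb W γ x k M i + pen W γ x k M i) ≤ 0 := by
    calc ∑ i, (eb W γ x k M i + pen W γ x k M i)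
        ≤ ∑ i, ∑ j, tau W x k M i j := Finset.sum_le_sum fun i _ => claimA hW hγ hM i
      _ = 0 := sum_tau_zero hW hM
  rw [Finset.sum_add_distrib] at h3
  linarith

/-- a "witness" configuration forcing a β-decrease -/
def Wit (G : SimpleGraph (Fin n)) (W : Matrix (Fin n) (Fin n) ℝ) (γ : ℝ)
    (x : ℕ → Fin n → ℝ) (k : ℕ) (M : ℤ) : Prop :=
  ∃ i j, G.Adj i j ∧
    ((⌊x k i⌋ = M ∧ (M:ℝ) + 1 + alpha W γ j < x k j) ∨
     (⌊x k i⌋ = M + 1 ∧ cfr x k i ≤ alpha W γ i ∧ M + 2 ≤ ⌊x k j⌋))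

include hW hγ hM in
lemma pen_wit (hwit : Wit G W γ x k M) :
    min γ (deltaMin' G W) ≤ ∑ i, pen W γ x k M i := by
  have hγ0 := hγ.1
  obtain ⟨i, j, hadj, hcase⟩ := hwit
  have hstep : ∀ i0, (min γ (deltaMin' G W)) ≤ pen W γ x k M i0 →
      min γ (deltaMin' G W) ≤ ∑ i, pen W γ x k M i := by
    intro i0 h0
    calc min γ (deltaMin' G W) ≤ pen W γ x k M i0 := h0
      _ ≤ ∑ i, pen W γ x k M i :=
        Finset.single_le_sum (fun i _ => pen_nonneg hW hγ hM i) (mem_univ i0)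
  rcases hcase with ⟨hL, hxj⟩ | ⟨hm, hc, hj2⟩
  · -- low node i adjacent to a node j above M+1+α_j
    have hαj : 0 < alpha W γ j := lt_of_lt_of_le hγ0 (alpha_ge hW hγ j)
    have hfloorj : M + 1 ≤ ⌊x k j⌋ := by
      apply Int.le_floor.2
      push_cast
      linarith
    rcases (show ⌊x k j⌋ = M + 1 ∨ M + 2 ≤ ⌊x k j⌋ by omega) with hj1 | hj2
    · -- j is an X4 node
      apply hstep j
      have hcj : ¬ cfr x k j ≤ alpha W γ j := by
        have hxx : x k j = (⌊x k j⌋ : ℝ) + cfr x k j := by unfold cfr; ring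
        rw [hj1] at hxx
        push_neg
        push_cast at hxx
        linarith
      rw [pen, if_neg (by omega), if_pos hj1, if_neg hcj]
      refine le_min ?_ ?_
      · -- δ ≤ Df j
        have hterm : W j i * max (Yr x k j - Yr x k i) 0 = W j i := by
          have hy : Yr x k j - Yr x k i = 1 := by
            unfold Yr; rw [hj1, hL]; push_cast; ring
          rw [hy]; simp
        have hDj : W j i ≤ Df W x k j := by
          calc W j i = W j i * max (Yr x k j - Yr x k i) 0 := hterm.symm
            _ ≤ ∑ l, W j l * max (Yr x k j - Yr x k l) 0 :=
              Finset.single_le_sum (f := fun l => W j l * max (Yr x k j - Yr x k l) 0)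
                (fun l _ => mul_nonneg (Wnn hW j l) (le_max_right _ _)) (mem_univ i)
            _ = Df W x k j := rfl
        have hδ : deltaMin' G W ≤ W j i := delta_le_adj hadj.symm
        calc min γ (deltaMin' G W) ≤ deltaMin' G W := min_le_right _ _
          _ ≤ W j i := hδ
          _ ≤ Df W x k j := hDj
      · push_neg at hcj
        have hf := x4_gap (k := k) hW hγ hM hj1 (by push_neg; exact hcj)
        have hU := Uf_nonneg (x := x) hW k j
        calc min γ (deltaMin' G W) ≤ γ := min_le_left _ _
          _ ≤ Uf W x k j + (cfr x k j - alpha W γ j) := by linarith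
    · -- j is high: pen at i
      apply hstep i
      rw [pen, if_pos hL]
      refine le_min ?_ ?_
      · have hwb : W i j ≤ wb W x k M i := by
          have h0 : (if M + 2 ≤ ⌊x k j⌋ then W i j else 0) = W i j := by rw [if_pos hj2]
          calc W i j = (if M + 2 ≤ ⌊x k j⌋ then W i j else 0) := h0.symm
            _ ≤ ∑ l, (if M + 2 ≤ ⌊x k l⌋ then W i l else 0) :=
              Finset.single_le_sum (f := fun l => if M + 2 ≤ ⌊x k l⌋ then W i l else 0)
                (fun l _ => by
                  by_cases h : M + 2 ≤ ⌊x k l⌋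
                  · rw [if_pos h]; exact Wnn hW i l
                  · rw [if_neg h]) (mem_univ j)
            _ = wb W x k M i := rfl
        calc min γ (deltaMin' G W) ≤ deltaMin' G W := min_le_right _ _
          _ ≤ W i j := delta_le_adj hadj
          _ ≤ wb W x k M i := hwb
      · calc min γ (deltaMin' G W) ≤ γ := min_le_left _ _
          _ ≤ 3*γ := by linarith
  · -- i is X3 adjacent to high j
    apply hstep i
    rw [pen, if_neg (by omega), if_pos hm, if_pos hc]
    refine le_min ?_ ?_
    · have hUi : W i j ≤ Uf W x k i := by
        have h1 : (1:ℝ) ≤ Yr x k j - Yr x k i := by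
          unfold Yr; rw [hm]
          have hcast : ((M:ℝ) + 2) ≤ (⌊x k j⌋ : ℝ) := by exact_mod_cast hj2
          push_cast; linarith
        have hterm : W i j ≤ W i j * max (Yr x k j - Yr x k i) 0 := by
          have h2 : (1:ℝ) ≤ max (Yr x k j - Yr x k i) 0 := le_max_of_le_left h1
          nlinarith [Wnn hW i j]
        calc W i j ≤ W i j * max (Yr x k j - Yr x k i) 0 := hterm
          _ ≤ ∑ l, W i l * max (Yr x k l - Yr x k i) 0 :=
            Finset.single_le_sum (f := fun l => W i l * max (Yr x k l - Yr x k i) 0)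
              (fun l _ => mul_nonneg (Wnn hW i l) (le_max_right _ _)) (mem_univ j)
          _ = Uf W x k i := rfl
      calc min γ (deltaMin' G W) ≤ deltaMin' G W := min_le_right _ _
        _ ≤ W i j := delta_le_adj hadj
        _ ≤ Uf W x k i := hUi
    · have hD := Df_nonneg (x := x) hW k i
      calc min γ (deltaMin' G W) ≤ γ := min_le_left _ _
        _ ≤ Df W x k i + γ := by linarith

include hW hx hγ hM in
lemma phi_wit_decr (hwit : Wit G W γ x k M) :
    phiAt W γ x (k+1) M ≤ phiAt W γ x k M - min γ (deltaMin' G W) := by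
  have := phi_decr hW hx hγ hM
  have := pen_wit hW hγ hM hwit
  linarith

include hW hx hγ hM in
lemma phi_mono : phiAt W γ x (k+1) M ≤ phiAt W γ x k M := by
  have h1 := phi_decr hW hx hγ hM
  have h2 : 0 ≤ ∑ i, pen W γ x k M i :=
    Finset.sum_nonneg fun i _ => pen_nonneg hW hγ hM i
  linarith

end Assembly2
end QL6
namespace QL6
section Passive
open Finset
variable {n : ℕ} {G : SimpleGraph (Fin n)} {W : Matrix (Fin n) (Fin n) ℝ}
  {x : ℕ → Fin n → ℝ} {γ : ℝ} {k : ℕ} {M : ℤ}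

/-- node is in the high set X4 ∪ X5 ∪ X6 -/
def isH (W : Matrix (Fin n) (Fin n) ℝ) (γ : ℝ) (x : ℕ → Fin n → ℝ) (k : ℕ) (M : ℤ)
    (i : Fin n) : Prop := (M:ℝ) + 1 + alpha W γ i < x k i

variable (hW : Assumption1 G W) (hx : Traj W x) (hγ : GammaSetup W x γ)
  (hM : ∀ i, M ≤ ⌊x k i⌋)

include hW hγ hM in
lemma isH_iff (i : Fin n) : isH W γ x k M i ↔
    (⌊x k i⌋ = M + 1 ∧ ¬ (cfr x k i ≤ alpha W γ i)) ∨ M + 2 ≤ ⌊x k i⌋ := by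
  have hγ0 := hγ.1
  have hxc : x k i = (⌊x k i⌋ : ℝ) + cfr x k i := by unfold cfr; ring
  have hα1 := alpha_le hW hγ i
  have hα0 := alpha_ge hW hγ i
  have hc0 := cfr_nonneg (x := x) i k
  have hc1 := cfr_lt_one (x := x) i k
  constructor
  · intro h
    rcases (show ⌊x k i⌋ = M ∨ ⌊x k i⌋ = M + 1 ∨ M + 2 ≤ ⌊x k i⌋ by have := hM i; omega)
      with h1 | h1 | h1
    · exfalso
      rw [isH, hxc, h1] at h
      push_cast at h
      linarith
    · left
      refine ⟨h1, ?_⟩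
      rw [isH, hxc, h1] at h
      push_cast at h
      push_neg
      linarith
    · right; exact h1
  · intro h
    rcases h with ⟨h1, h2⟩ | h1
    · push_neg at h2
      rw [isH, hxc, h1]
      push_cast
      linarith
    · rw [isH]
      have h3 : ((M:ℝ) + 2) ≤ (⌊x k i⌋ : ℝ) := by exact_mod_cast h1
      have hfl := Int.floor_le (x k i)
      linarith

include hW hγ hM in
lemma nonH_cases {i : Fin n} (h : ¬ isH W γ x k M i) :
    ⌊x k i⌋ = M ∨ (⌊x k i⌋ = M + 1 ∧ cfr x k i ≤ alpha W γ i) := by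
  rcases (show ⌊x k i⌋ = M ∨ ⌊x k i⌋ = M + 1 ∨ M + 2 ≤ ⌊x k i⌋ by have := hM i; omega)
    with h1 | h1 | h1
  · exact Or.inl h1
  · refine Or.inr ⟨h1, ?_⟩
    by_contra hc
    exact h ((isH_iff hW hγ hM i).2 (Or.inl ⟨h1, hc⟩))
  · exact absurd ((isH_iff hW hγ hM i).2 (Or.inr h1)) h

include hW hγ hM in
lemma H_gt {i : Fin n} (h : isH W γ x k M i) : M + 1 ≤ ⌊x k i⌋ := by
  rcases (isH_iff hW hγ hM i).1 h with ⟨h1, _⟩ | h1 <;> omega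

include hW in
lemma wit_adj_H {i j : Fin n} (hnw : ¬ Wit G W γ x k M) (hadj : G.Adj i j)
    (hH : isH W γ x k M j) : ⌊x k i⌋ ≠ M := by
  intro hL
  exact hnw ⟨i, j, hadj, Or.inl ⟨hL, hH⟩⟩

include hW in
lemma W_eq_zero_of_wit {i j : Fin n} (hnw : ¬ Wit G W γ x k M)
    (hH : isH W γ x k M j) (hiL : ⌊x k i⌋ = M) (hij : i ≠ j) : W i j = 0 := by
  by_contra hw0
  have hadj : G.Adj i j := by
    by_contra hna
    exact hw0 (hW.2.2.2.2.1 i j hij hna)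
  exact (wit_adj_H hW hnw hadj hH) hiL

include hW hx hγ hM in
lemma passive_H_pres (hnw : ¬ Wit G W γ x k M) (i : Fin n) :
    isH W γ x (k+1) M i ↔ isH W γ x k M i := by
  have hγ0 := hγ.1
  have hx' : x (k+1) i = x k i + Uf W x k i - Df W x k i := xstep hW hx k i
  have hxc : x k i = (⌊x k i⌋ : ℝ) + cfr x k i := by unfold cfr; ring
  have hα1 := alpha_le hW hγ i
  have hα0 := alpha_ge hW hγ i
  have hc0 := cfr_nonneg (x := x) i k
  have hc1 := cfr_lt_one (x := x) i k
  have hWii := Wii_ge hγ i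
  by_cases hH : isH W γ x k M i
  · -- H stays H : neighbours with weight > 0 have floor ≥ M+1
    have hnbr : ∀ j, j ≠ i → ⌊x k j⌋ = M → W i j = 0 := by
      intro j hji hjM
      rw [hW.1 i j]
      exact W_eq_zero_of_wit hW hnw hH hjM hji
    have hDle : Df W x k i ≤ (1 - W i i) * (Yr x k i - ((M:ℝ)+1)) := by
      have hYi : ((M:ℝ)+1) ≤ Yr x k i := by
        have h1 := H_gt hW hγ hM hH
        unfold Yr
        exact_mod_cast h1
      have hkey : Df W x k i
          ≤ ∑ j, (if j = i then (0:ℝ) else W i j) * (Yr x k i - ((M:ℝ)+1)) := by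
        rw [Df]
        refine Finset.sum_le_sum fun j _ => ?_
        by_cases hj : j = i
        · subst hj; simp
        · simp only [hj, if_false]
          by_cases hjM : ⌊x k j⌋ = M
          · rw [hnbr j hj hjM]
            simp
          · refine mul_le_mul_of_nonneg_left ?_ (Wnn hW i j)
            refine max_le ?_ (by linarith)
            have h2 : M + 1 ≤ ⌊x k j⌋ := by have := hM j; omega
            have h3 : ((M:ℝ)+1) ≤ (⌊x k j⌋:ℝ) := by exact_mod_cast h2
            unfold Yr; linarith
      rw [← Finset.sum_mul, sum_if_ne hW i] at hkey
      exact hkey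
    constructor
    · intro _; exact hH
    · intro _
      rcases (isH_iff hW hγ hM i).1 hH with ⟨h1, h2⟩ | h1
      · -- X4 : floor M+1, Df = 0
        have hY1 : Yr x k i - ((M:ℝ)+1) = 0 := by
          unfold Yr; rw [h1]; push_cast; ring
        have hD0 : Df W x k i = 0 := le_antisymm (by rw [hY1] at hDle; linarith [hDle])
          (Df_nonneg hW k i)
        have hU := Uf_nonneg (x := x) hW k i
        rw [isH] at hH ⊢
        rw [hx', hD0]
        linarith
      · -- floor ≥ M+2
        have hY2 : (2:ℝ) ≤ Yr x k i - (M:ℝ) := by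
          unfold Yr
          have h3 : ((M:ℝ)+2) ≤ (⌊x k i⌋:ℝ) := by exact_mod_cast h1
          linarith
        have hU := Uf_nonneg (x := x) hW k i
        have hxY : Yr x k i ≤ x k i := Int.floor_le (x k i)
        rw [isH, hx']
        -- x' ≥ x - (1-Wii)(Y - M - 1) ≥ (M+1) + Wii (Y-M-1) ≥ M+1+Wii > M+1+α
        have key : (M:ℝ) + 1 + W i i * (Yr x k i - (M:ℝ) - 1) ≤ x k i - Df W x k i := by
          nlinarith [hDle]
        have hW2 : W i i * 1 ≤ W i i * (Yr x k i - (M:ℝ) - 1) := by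
          refine mul_le_mul_of_nonneg_left (by linarith) (by linarith)
        unfold alpha
        nlinarith
  · -- non-H stays non-H
    rcases nonH_cases hW hγ hM hH with hL | ⟨hm1, hc⟩
    · -- low node
      have huh0 : uh W x k M i = 0 := by
        refine Finset.sum_eq_zero fun j _ => ?_
        by_cases hj : M + 2 ≤ ⌊x k j⌋
        · rw [if_pos hj]
          have hji : j ≠ i := by intro h; rw [h, hL] at hj; omega
          have hHj : isH W γ x k M j := (isH_iff hW hγ hM j).2 (Or.inr hj)
          rw [W_eq_zero_of_wit hW hnw hHj hL hji.symm, zero_mul]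
        · rw [if_neg hj]
      have hU : Uf W x k i = mw W x k M i + uh W x k M i := Uf_L hM hL
      have hD : Df W x k i = 0 := Df_L hM hL
      have hmw : mw W x k M i + wb W x k M i ≤ 1 - W i i := mw_add_wb_le hW hL
      have hwb := wb_nonneg (x := x) (k := k) (M := M) hW i
      constructor
      · intro hH1
        exfalso
        rw [isH, hx', hU, hD, huh0, hxc, hL] at hH1
        push_cast at hH1
        unfold alpha at hH1
        linarith
      · intro h; exact absurd h hH
    · -- X3 node
      have hU0 : Uf W x k i = 0 := by
        refine Finset.sum_eq_zero fun j _ => ?_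
        rcases (show ⌊x k j⌋ = M ∨ ⌊x k j⌋ = M + 1 ∨ M + 2 ≤ ⌊x k j⌋ by have := hM j; omega)
          with h2 | h2 | h2
        · have : Yr x k j - Yr x k i ≤ 0 := by
            unfold Yr; rw [hm1, h2]; push_cast; linarith
          rw [max_eq_right this, mul_zero]
        · have : Yr x k j - Yr x k i = 0 := by unfold Yr; rw [hm1, h2]; ring
          rw [this, max_self, mul_zero]
        · have hji : j ≠ i := by intro h; rw [h, hm1] at h2; omega
          have hadj0 : W i j = 0 := by
            by_contra hw0
            have hadj : G.Adj i j := by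
              by_contra hna
              exact hw0 (hW.2.2.2.2.1 i j (fun h => hji h.symm) hna)
            exact hnw ⟨i, j, hadj, Or.inr ⟨hm1, hc, h2⟩⟩
          rw [hadj0, zero_mul]
      have hD := Df_nonneg (x := x) hW k i
      constructor
      · intro hH1
        exfalso
        rw [isH, hx', hU0] at hH1
        rw [isH] at hH
        push_neg at hH
        linarith
      · intro h; exact absurd h hH

include hW hx hγ hM in
lemma passive_low_step (hnw : ¬ Wit G W γ x k M) {p : Fin n} (hp : ⌊x k p⌋ = M) :
    x (k+1) p ≤ x k p + (1/2 - 2*γ) := by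
  have hx' : x (k+1) p = x k p + Uf W x k p - Df W x k p := xstep hW hx k p
  have hU : Uf W x k p = mw W x k M p + uh W x k M p := Uf_L hM hp
  have huh0 : uh W x k M p = 0 := by
    refine Finset.sum_eq_zero fun j _ => ?_
    by_cases hj : M + 2 ≤ ⌊x k j⌋
    · rw [if_pos hj]
      have hji : j ≠ p := by intro h; rw [h, hp] at hj; omega
      have hHj : isH W γ x k M j := (isH_iff hW hγ hM j).2 (Or.inr hj)
      rw [W_eq_zero_of_wit hW hnw hHj hp hji.symm, zero_mul]
    · rw [if_neg hj]
  have hmw : mw W x k M p + wb W x k M p ≤ 1 - W p p := mw_add_wb_le hW hp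
  have hwb := wb_nonneg (x := x) (k := k) (M := M) hW p
  have hD := Df_nonneg (x := x) hW k p
  have hWii := Wii_ge hγ p
  rw [hx', hU, huh0]
  linarith

include hW hx hγ hM in
lemma passive_x3_step (hnw : ¬ Wit G W γ x k M) {p : Fin n} (hp : ⌊x k p⌋ = M + 1)
    (hc : cfr x k p ≤ alpha W γ p) {q : Fin n} (hq : ⌊x k q⌋ = M) :
    x (k+1) p ≤ x k p - W p q := by
  have hx' : x (k+1) p = x k p + Uf W x k p - Df W x k p := xstep hW hx k p
  have hU0 : Uf W x k p = 0 := by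
    refine Finset.sum_eq_zero fun j _ => ?_
    rcases (show ⌊x k j⌋ = M ∨ ⌊x k j⌋ = M + 1 ∨ M + 2 ≤ ⌊x k j⌋ by have := hM j; omega)
      with h2 | h2 | h2
    · have : Yr x k j - Yr x k p ≤ 0 := by
        unfold Yr; rw [hp, h2]; push_cast; linarith
      rw [max_eq_right this, mul_zero]
    · have : Yr x k j - Yr x k p = 0 := by unfold Yr; rw [hp, h2]; ring
      rw [this, max_self, mul_zero]
    · have hji : j ≠ p := by intro h; rw [h, hp] at h2; omega
      have hadj0 : W p j = 0 := by
        by_contra hw0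
        have hadj : G.Adj p j := by
          by_contra hna
          exact hw0 (hW.2.2.2.2.1 p j (fun h => hji h.symm) hna)
        exact hnw ⟨p, j, hadj, Or.inr ⟨hp, hc, h2⟩⟩
      rw [hadj0, zero_mul]
  have hDq : W p q ≤ Df W x k p := by
    have hterm : W p q * max (Yr x k p - Yr x k q) 0 = W p q := by
      have hy : Yr x k p - Yr x k q = 1 := by
        unfold Yr; rw [hp, hq]; push_cast; ring
      rw [hy]; simp
    calc W p q = W p q * max (Yr x k p - Yr x k q) 0 := hterm.symm
      _ ≤ ∑ l, W p l * max (Yr x k p - Yr x k l) 0 :=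
        Finset.single_le_sum (f := fun l => W p l * max (Yr x k p - Yr x k l) 0)
          (fun l _ => mul_nonneg (Wnn hW p l) (le_max_right _ _)) (mem_univ q)
      _ = Df W x k p := rfl
  rw [hx', hU0]
  linarith

include hW hx hγ hM in
lemma passive_x3_step0 (hnw : ¬ Wit G W γ x k M) {p : Fin n} (hp : ⌊x k p⌋ = M + 1)
    (hc : cfr x k p ≤ alpha W γ p) : x (k+1) p ≤ x k p := by
  have hx' : x (k+1) p = x k p + Uf W x k p - Df W x k p := xstep hW hx k p
  have hU0 : Uf W x k p = 0 := by
    refine Finset.sum_eq_zero fun j _ => ?_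
    rcases (show ⌊x k j⌋ = M ∨ ⌊x k j⌋ = M + 1 ∨ M + 2 ≤ ⌊x k j⌋ by have := hM j; omega)
      with h2 | h2 | h2
    · have : Yr x k j - Yr x k p ≤ 0 := by
        unfold Yr; rw [hp, h2]; push_cast; linarith
      rw [max_eq_right this, mul_zero]
    · have : Yr x k j - Yr x k p = 0 := by unfold Yr; rw [hp, h2]; ring
      rw [this, max_self, mul_zero]
    · have hji : j ≠ p := by intro h; rw [h, hp] at h2; omega
      have hadj0 : W p j = 0 := by
        by_contra hw0
        have hadj : G.Adj p j := by
          by_contra hna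
          exact hw0 (hW.2.2.2.2.1 p j (fun h => hji h.symm) hna)
        exact hnw ⟨p, j, hadj, Or.inr ⟨hp, hc, h2⟩⟩
      rw [hadj0, zero_mul]
  have hD := Df_nonneg (x := x) hW k p
  rw [hx', hU0]
  linarith

end Passive
end QL6
namespace QL6
section Run
open Finset
variable {n : ℕ} {G : SimpleGraph (Fin n)} {W : Matrix (Fin n) (Fin n) ℝ}
  {x : ℕ → Fin n → ℝ} {γ : ℝ} {M : ℤ}

noncomputable def lam (x : ℕ → Fin n → ℝ) (M : ℤ) (a b : ℕ) (v : Fin n) : ℕ :=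
  ((Finset.Ico a b).filter fun k => ⌊x k v⌋ = M).card

variable (hW : Assumption1 G W) (hx : Traj W x) (hγ : GammaSetup W x γ)
  (hG : G.Connected) (hn : 1 < n) (hn0 : 0 < n) {a b : ℕ}
  (hmm : ∀ k, a ≤ k → k ≤ b → mfun hn0 x k = M)
  (hnw : ∀ k, a ≤ k → k < b → ¬ Wit G W γ x k M)

include hmm in
lemma hM_all : ∀ k, a ≤ k → k ≤ b → ∀ i, M ≤ ⌊x k i⌋ := by
  intro k h1 h2 i
  rw [← hmm k h1 h2]
  exact m_le_floor hn0 k i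

include hW hx hγ hmm hnw in
lemma run_H_const : ∀ k, a ≤ k → k ≤ b → ∀ i, (isH W γ x k M i ↔ isH W γ x a M i) := by
  intro k hak
  refine Nat.le_induction ?_ ?_ k hak
  · intro _ i; exact Iff.rfl
  · intro k hk ih hkb i
    have h1 : k ≤ b := by omega
    have h2 : k < b := by omega
    exact (passive_H_pres hW hx hγ (hM_all hn0 hmm k hk h1) (hnw k hk h2) i).trans (ih h1 i)

include hmm in
lemma sum_lam_ge : b - a ≤ ∑ v, lam x M a b v := by
  have h2 : ∀ k ∈ Ico a b, (1:ℕ) ≤ ∑ v : Fin n, (if ⌊x k v⌋ = M then 1 else 0) := by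
    intro k hk
    rw [Finset.mem_Ico] at hk
    obtain ⟨v, hv⟩ := exists_floor_eq_m (x := x) hn0 k
    rw [hmm k hk.1 (le_of_lt hk.2)] at hv
    calc (1:ℕ) = (if ⌊x k v⌋ = M then 1 else 0) := by rw [if_pos hv]
      _ ≤ ∑ v : Fin n, (if ⌊x k v⌋ = M then 1 else 0) :=
        Finset.single_le_sum (f := fun v => if ⌊x k v⌋ = M then (1:ℕ) else 0)
          (fun l _ => by by_cases h : ⌊x k l⌋ = M <;> simp [h]) (mem_univ v)
  calc b - a = ∑ _k ∈ Ico a b, 1 := by rw [Finset.sum_const, Nat.card_Ico, smul_eq_mul, mul_one]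
    _ ≤ ∑ k ∈ Ico a b, ∑ v : Fin n, (if ⌊x k v⌋ = M then 1 else 0) := Finset.sum_le_sum h2
    _ = ∑ v : Fin n, ∑ k ∈ Ico a b, (if ⌊x k v⌋ = M then 1 else 0) := Finset.sum_comm
    _ = ∑ v, lam x M a b v := by
        refine Finset.sum_congr rfl fun v _ => ?_
        rw [lam, Finset.card_filter]

include hW hx hγ hG hn hmm hnw in
lemma hop (hab : a ≤ b) {p q : Fin n} (hadj : G.Adj p q) (hpH : ¬ isH W γ x a M p) :
    (lam x M a b q : ℝ) ≤ (1 + 1/(2*deltaMin' G W)) * (lam x M a b p : ℝ)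
      + 3 * (1/(2*deltaMin' G W)) := by
  set δ := deltaMin' G W with hδdef
  have hδ : 0 < δ := delta_pos hW hG hn
  have hγ0 := hγ.1
  have hstep : ∀ k, a ≤ k → k < b →
      x (k+1) p - x k p ≤ (1/2)*(if ⌊x k p⌋ = M then (1:ℝ) else 0)
        - W p q * (if (⌊x k p⌋ = M + 1 ∧ ⌊x k q⌋ = M) then (1:ℝ) else 0) := by
    intro k hak hkb
    have hMk := hM_all hn0 hmm k hak (le_of_lt hkb)
    have hnwk := hnw k hak hkb
    have hpnH : ¬ isH W γ x k M p := by
      rw [run_H_const hW hx hγ hn0 hmm hnw k hak (le_of_lt hkb) p]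
      exact hpH
    rcases nonH_cases hW hγ hMk hpnH with hpL | ⟨hp1, hpc⟩
    · rw [if_pos hpL, if_neg (by rintro ⟨h1, _⟩; omega)]
      have := passive_low_step hW hx hγ hMk hnwk hpL
      have hWq := Wnn hW p q
      linarith
    · rw [if_neg (by omega)]
      by_cases hq : ⌊x k q⌋ = M
      · rw [if_pos ⟨hp1, hq⟩]
        have := passive_x3_step hW hx hγ hMk hnwk hp1 hpc hq
        linarith
      · rw [if_neg (by rintro ⟨_, h2⟩; exact hq h2)]
        have := passive_x3_step0 hW hx hγ hMk hnwk hp1 hpc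
        linarith
  -- telescoping sum
  have htel : x b p - x a p = ∑ k ∈ Ico a b, (x (k+1) p - x k p) := by
    rw [Finset.sum_Ico_eq_sum_range]
    have h1 := Finset.sum_range_sub (fun i => x (a+i) p) (b - a)
    have h2 : a + (b - a) = b := by omega
    rw [h2] at h1
    simpa [add_assoc] using h1.symm
  set dc : ℕ := ((Ico a b).filter fun k => ⌊x k p⌋ = M + 1 ∧ ⌊x k q⌋ = M).card with hdc
  have hsum : x b p - x a p ≤ (1/2) * (lam x M a b p : ℝ) - W p q * (dc : ℝ) := by
    rw [htel]
    calc ∑ k ∈ Ico a b, (x (k+1) p - x k p)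
        ≤ ∑ k ∈ Ico a b, ((1/2)*(if ⌊x k p⌋ = M then (1:ℝ) else 0)
            - W p q * (if (⌊x k p⌋ = M + 1 ∧ ⌊x k q⌋ = M) then (1:ℝ) else 0)) := by
          refine Finset.sum_le_sum fun k hk => ?_
          rw [Finset.mem_Ico] at hk
          exact hstep k hk.1 hk.2
      _ = (1/2) * (lam x M a b p : ℝ) - W p q * (dc : ℝ) := by
          rw [Finset.sum_sub_distrib, ← Finset.mul_sum, ← Finset.mul_sum,
            Finset.sum_boole, Finset.sum_boole]
          rfl
  have hend1 : (M:ℝ) ≤ x b p := by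
    have := m_le_x (x := x) hn0 b p
    rwa [hmm b hab (le_refl b)] at this
  have hend2 : x a p ≤ (M:ℝ) + 1 + alpha W γ p := by
    rw [isH] at hpH; push_neg at hpH; exact hpH
  have hα := alpha_le hW hγ p
  have hδW : δ ≤ W p q := delta_le_adj hadj
  have hdc3 : (dc:ℝ) * δ ≤ 3/2 + (lam x M a b p : ℝ)/2 := by
    have h1 : (dc:ℝ) * δ ≤ (dc:ℝ) * W p q :=
      mul_le_mul_of_nonneg_left hδW (Nat.cast_nonneg dc)
    nlinarith
  have hdcρ : (dc:ℝ) ≤ 3 * (1/(2*δ)) + (1/(2*δ)) * (lam x M a b p : ℝ) := by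
    have h3 : 3 * (1/(2*δ)) + (1/(2*δ)) * (lam x M a b p : ℝ)
        = (3/2 + (lam x M a b p : ℝ)/2) / δ := by
      field_simp
    rw [h3, le_div_iff₀ hδ]
    exact hdc3
  have hcard : lam x M a b q ≤ lam x M a b p + dc := by
    have hsub : (Ico a b).filter (fun k => ⌊x k q⌋ = M)
        ⊆ ((Ico a b).filter fun k => ⌊x k p⌋ = M)
          ∪ ((Ico a b).filter fun k => ⌊x k p⌋ = M + 1 ∧ ⌊x k q⌋ = M) := by
      intro k hk
      rw [Finset.mem_filter] at hk
      obtain ⟨hkI, hkq⟩ := hk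
      have hk2 := hkI
      rw [Finset.mem_Ico] at hk2
      have hMk := hM_all hn0 hmm k hk2.1 (le_of_lt hk2.2)
      have hpnH : ¬ isH W γ x k M p := by
        rw [run_H_const hW hx hγ hn0 hmm hnw k hk2.1 (le_of_lt hk2.2) p]
        exact hpH
      rw [Finset.mem_union, Finset.mem_filter, Finset.mem_filter]
      rcases nonH_cases hW hγ hMk hpnH with hpL | ⟨hp1, _⟩
      · exact Or.inl ⟨hkI, hpL⟩
      · exact Or.inr ⟨hkI, hp1, hkq⟩
    calc lam x M a b q ≤ _ := Finset.card_le_card hsub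
      _ ≤ lam x M a b p + dc := Finset.card_union_le _ _
  have hcast : (lam x M a b q : ℝ) ≤ (lam x M a b p : ℝ) + (dc : ℝ) := by
    exact_mod_cast hcard
  calc (lam x M a b q : ℝ) ≤ (lam x M a b p : ℝ) + (dc : ℝ) := hcast
    _ ≤ (lam x M a b p : ℝ) + (3 * (1/(2*δ)) + (1/(2*δ)) * (lam x M a b p : ℝ)) := by
        linarith [hdcρ]
    _ = (1 + 1/(2*δ)) * (lam x M a b p : ℝ) + 3 * (1/(2*δ)) := by ring

include hW hx hγ hmm hnw in
lemma lam_H_zero {v : Fin n} (hvH : isH W γ x a M v) (hab : a ≤ b) : lam x M a b v = 0 := by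
  rw [lam, Finset.card_eq_zero, Finset.filter_eq_empty_iff]
  intro k hk
  rw [Finset.mem_Ico] at hk
  have hMk := hM_all hn0 hmm k hk.1 (le_of_lt hk.2)
  have hH : isH W γ x k M v := by
    rw [run_H_const hW hx hγ hn0 hmm hnw k hk.1 (le_of_lt hk.2) v]
    exact hvH
  have := H_gt hW hγ hMk hH
  omega

include hW hx hγ hmm hnw in
lemma lam_adj_H_zero {v h : Fin n} (hadj : G.Adj v h) (hhH : isH W γ x a M h) :
    lam x M a b v = 0 := by
  rw [lam, Finset.card_eq_zero, Finset.filter_eq_empty_iff]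
  intro k hk hvM
  rw [Finset.mem_Ico] at hk
  have hH : isH W γ x k M h := by
    rw [run_H_const hW hx hγ hn0 hmm hnw k hk.1 (le_of_lt hk.2) h]
    exact hhH
  exact hnw k hk.1 hk.2 ⟨v, h, hadj, Or.inl ⟨hvM, hH⟩⟩

include hW hx hγ hG hn hmm hnw in
lemma run_dist (hab : a ≤ b) {h0 : Fin n} (hH0 : isH W γ x a M h0) :
    ∀ j (v : Fin n), G.dist v h0 ≤ j + 1 →
      (lam x M a b v : ℝ) + 3 ≤ 3 * (1 + 1/(2*deltaMin' G W))^j := by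
  set δ := deltaMin' G W with hδdef
  have hδ : 0 < δ := delta_pos hW hG hn
  have hρ : (0:ℝ) ≤ 1/(2*δ) := by positivity
  intro j
  induction j with
  | zero =>
    intro v hd
    have hz : lam x M a b v = 0 := by
      rcases Nat.le_one_iff_eq_zero_or_eq_one.1 hd with h1 | h1
      · have := (SimpleGraph.dist_eq_zero_iff_eq_or_not_reachable).1 h1
        rcases this with rfl | hnr
        · exact lam_H_zero hW hx hγ hn0 hmm hnw hH0 hab
        · exact absurd (hG.preconnected v h0) hnr
      · have hadj : G.Adj v h0 := SimpleGraph.dist_eq_one_iff_adj.1 h1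
        exact lam_adj_H_zero hW hx hγ hn0 hmm hnw hadj hH0
    rw [hz, pow_zero]
    norm_num
  | succ j ih =>
    intro v hd
    have h1ρ : (1:ℝ) ≤ 1 + 1/(2*δ) := by linarith
    have hmono : 3 * (1 + 1/(2*δ))^j ≤ 3 * (1 + 1/(2*δ))^(j+1) := by
      have := pow_le_pow_right₀ h1ρ (show j ≤ j + 1 by omega)
      linarith
    by_cases hvH : isH W γ x a M v
    · have hz := lam_H_zero hW hx hγ hn0 hmm hnw hvH hab
      rw [hz]
      have hpow : (1:ℝ) ≤ (1 + 1/(2*δ))^(j+1) := by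
        calc (1:ℝ) = 1^(j+1) := (one_pow _).symm
          _ ≤ (1 + 1/(2*δ))^(j+1) := pow_le_pow_left₀ (by norm_num) h1ρ _
      push_cast
      nlinarith
    rcases Nat.lt_or_ge (G.dist v h0) (j+2) with hlt | hge
    · exact le_trans (ih v (by omega)) hmono
    · have hdist : G.dist v h0 = j + 2 := by omega
      obtain ⟨pth, hp, hlen⟩ := hG.exists_path_of_dist v h0
      cases pth with
      | nil =>
        rw [SimpleGraph.Walk.length_nil] at hlen
        omega
      | @cons _ u _ hadj t =>
        rw [SimpleGraph.Walk.length_cons] at hlen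
        have hdu : G.dist u h0 ≤ j + 1 := by
          have := SimpleGraph.dist_le t
          omega
        by_cases huH : isH W γ x a M u
        · have hz := lam_adj_H_zero hW hx hγ hn0 hmm hnw hadj huH
          rw [hz]
          have hpow : (1:ℝ) ≤ (1 + 1/(2*δ))^(j+1) := by
            calc (1:ℝ) = 1^(j+1) := (one_pow _).symm
              _ ≤ (1 + 1/(2*δ))^(j+1) := pow_le_pow_left₀ (by norm_num) h1ρ _
          push_cast
          nlinarith
        · have hhop := hop hW hx hγ hG hn hn0 hmm hnw hab hadj.symm huH
          have hihu := ih u hdu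
          have hlam0 : (0:ℝ) ≤ (lam x M a b u : ℝ) + 3 := by positivity
          calc (lam x M a b v : ℝ) + 3
              ≤ (1 + 1/(2*δ)) * (lam x M a b u : ℝ) + 3 * (1/(2*δ)) + 3 := by
                linarith [hhop]
            _ = (1 + 1/(2*δ)) * ((lam x M a b u : ℝ) + 3) := by ring
            _ ≤ (1 + 1/(2*δ)) * (3 * (1 + 1/(2*δ))^j) := by
                exact mul_le_mul_of_nonneg_left hihu (by linarith)
            _ = 3 * (1 + 1/(2*δ))^(j+1) := by ring

include hW hx hγ hG hn hmm hnw in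
lemma run_bound (hab : a ≤ b) (hHne : ∃ i, isH W γ x a M i) :
    ((b - a : ℕ) : ℝ) ≤ 3 * n * ((1 + 1/(2*deltaMin' G W))^(n-2) - 1) := by
  obtain ⟨h0, hH0⟩ := hHne
  have hdist : ∀ v : Fin n, G.dist v h0 ≤ (n - 2) + 1 := by
    intro v
    obtain ⟨pth, hp, hlen⟩ := hG.exists_path_of_dist v h0
    have := hp.length_lt
    rw [hlen] at this
    rw [Fintype.card_fin] at this
    omega
  have hper : ∀ v : Fin n, (lam x M a b v : ℝ) + 3
      ≤ 3 * (1 + 1/(2*deltaMin' G W))^(n-2) :=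
    fun v => run_dist hW hx hγ hG hn hn0 hmm hnw hab hH0 (n-2) v (hdist v)
  have h1 : ((b - a : ℕ) : ℝ) ≤ ((∑ v, lam x M a b v : ℕ) : ℝ) := by
    exact_mod_cast sum_lam_ge hn0 hmm
  have h2 : ((∑ v, lam x M a b v : ℕ) : ℝ) = ∑ v, (lam x M a b v : ℝ) := by
    push_cast; rfl
  have h3 : ∑ v : Fin n, (lam x M a b v : ℝ)
      ≤ ∑ _v : Fin n, (3 * (1 + 1/(2*deltaMin' G W))^(n-2) - 3) := by
    refine Finset.sum_le_sum fun v _ => ?_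
    have := hper v
    linarith
  have h4 : ∑ _v : Fin n, (3 * (1 + 1/(2*deltaMin' G W))^(n-2) - 3)
      = (n:ℝ) * (3 * (1 + 1/(2*deltaMin' G W))^(n-2) - 3) := by
    rw [Finset.sum_const, Finset.card_univ, Fintype.card_fin, nsmul_eq_mul]
  calc ((b - a : ℕ) : ℝ) ≤ ∑ v, (lam x M a b v : ℝ) := by rw [← h2]; exact h1
    _ ≤ (n:ℝ) * (3 * (1 + 1/(2*deltaMin' G W))^(n-2) - 3) := by rw [← h4]; exact h3
    _ = 3 * n * ((1 + 1/(2*deltaMin' G W))^(n-2) - 1) := by ring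

end Run
end QL6
namespace QL6
open scoped Classical
section Final
open Finset
variable {n : ℕ} {G : SimpleGraph (Fin n)} {W : Matrix (Fin n) (Fin n) ℝ}
  {x : ℕ → Fin n → ℝ} {γ : ℝ}
variable (hW : Assumption1 G W) (hx : Traj W x) (hγ : GammaSetup W x γ) (hn0 : 0 < n)

include hW hx hγ hn0 in
lemma Ppred_step (k : ℕ)
    (hP : ∀ i, x k i ≤ (mfun hn0 x k : ℝ) + 1 + alpha W γ i)
    (heq : mfun hn0 x (k+1) = mfun hn0 x k) :
    ∀ i, x (k+1) i ≤ (mfun hn0 x (k+1) : ℝ) + 1 + alpha W γ i := by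
  intro i
  set M := mfun hn0 x k with hMdef
  have hγ0 := hγ.1
  have hM : ∀ j, M ≤ ⌊x k j⌋ := fun j => m_le_floor hn0 k j
  have hflo : ∀ j, ⌊x k j⌋ ≤ M + 1 := by
    intro j
    have hα := alpha_le hW hγ j
    have h1 : x k j < (M:ℝ) + 2 := by
      have := hP j; linarith
    have : ⌊x k j⌋ < M + 2 := by
      apply Int.floor_lt.2
      push_cast
      exact h1
    omega
  have hx' : x (k+1) i = x k i + Uf W x k i - Df W x k i := xstep hW hx k i
  rw [heq]
  rcases (show ⌊x k i⌋ = M ∨ ⌊x k i⌋ = M + 1 by have := hM i; have := hflo i; omega)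
    with hL | hm
  · have hD : Df W x k i = 0 := Df_L hM hL
    have hU : Uf W x k i = mw W x k M i + uh W x k M i := Uf_L hM hL
    have huh0 : uh W x k M i = 0 := by
      refine Finset.sum_eq_zero fun j _ => ?_
      rw [if_neg (by have := hflo j; omega)]
    have hmw := mw_add_wb_le (x := x) (k := k) (M := M) hW hL
    have hwb := wb_nonneg (x := x) (k := k) (M := M) hW i
    have hxc : x k i = (⌊x k i⌋ : ℝ) + cfr x k i := by unfold cfr; ring
    have hc1 := cfr_lt_one (x := x) i k
    rw [hx', hU, huh0, hxc, hL]
    unfold alpha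
    push_cast
    linarith
  · have hU0 : Uf W x k i = 0 := by
      refine Finset.sum_eq_zero fun j _ => ?_
      have h1 : Yr x k j - Yr x k i ≤ 0 := by
        unfold Yr
        rw [hm]
        have h2 : (⌊x k j⌋ : ℝ) ≤ ((M:ℝ) + 1) := by exact_mod_cast hflo j
        push_cast
        linarith
      rw [max_eq_right h1, mul_zero]
    have hD := Df_nonneg (x := x) hW k i
    have := hP i
    rw [hx', hU0]
    linarith

include hW hx hγ hn0 in
lemma R_step (k0 k : ℕ) (hk : k0 ≤ k)
    (hR : (∀ i, x k i ≤ (mfun hn0 x k : ℝ) + 1 + alpha W γ i) ∨ mfun hn0 x k0 < mfun hn0 x k) :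
    (∀ i, x (k+1) i ≤ (mfun hn0 x (k+1) : ℝ) + 1 + alpha W γ i)
      ∨ mfun hn0 x k0 < mfun hn0 x (k+1) := by
  have hmono := m_mono hn0 hW hx k
  rcases hR with hP | hgt
  · rcases lt_or_eq_of_le hmono with hlt | heq
    · right
      have := m_mono_le hn0 hW hx hk
      omega
    · left
      exact Ppred_step hW hx hγ hn0 k hP heq.symm
  · right
    omega

include hW hx hγ hn0 in
lemma R_propagate (k0 k1 : ℕ) (hk : k0 ≤ k1)
    (hR : (∀ i, x k1 i ≤ (mfun hn0 x k1 : ℝ) + 1 + alpha W γ i) ∨ mfun hn0 x k0 < mfun hn0 x k1) :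
    ∀ k, k1 ≤ k →
      (∀ i, x k i ≤ (mfun hn0 x k : ℝ) + 1 + alpha W γ i) ∨ mfun hn0 x k0 < mfun hn0 x k := by
  intro k hk1
  refine Nat.le_induction ?_ ?_ k hk1
  · exact hR
  · intro m hm ih
    exact R_step hW hx hγ hn0 k0 m (le_trans hk hm) ih

lemma phi_nonneg (k : ℕ) (M : ℤ) : 0 ≤ phiAt W γ x k M :=
  Finset.sum_nonneg fun i _ => le_max_right _ _

include hn0 in
lemma phi_le_V (k0 : ℕ) :
    phiAt W γ x k0 (mfun hn0 x k0) ≤ Vfun hn0 W γ x k0 := by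
  refine Finset.sum_le_sum fun i _ => ?_
  refine max_le_max ?_ (le_refl 0)
  have := le_abs_self (x k0 i - (mfun hn0 x k0 : ℝ) - 1)
  have h2 : x k0 i - (mfun hn0 x k0 : ℝ) - 1 - alpha W γ i
      = (x k0 i - (mfun hn0 x k0 : ℝ) - 1) - alpha W γ i := by ring
  rw [h2]
  linarith

include hW hx hγ in
lemma phi_window (k0 N : ℕ) (M : ℤ) (hconst : ∀ j, j ≤ N → ∀ i, M ≤ ⌊x (k0+j) i⌋) :
    ∀ t, t ≤ N → phiAt W γ x (k0+t) M
      + (min γ (deltaMin' G W)) * ((((range t).filter fun j => Wit G W γ x (k0+j) M)).card : ℝ)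
      ≤ phiAt W γ x k0 M := by
  intro t
  induction t with
  | zero => intro _; simp
  | succ t ih =>
    intro ht
    have ht' : t ≤ N := by omega
    have ihh := ih ht'
    have hMt := hconst t ht'
    have hstep : phiAt W γ x (k0+t+1) M ≤ phiAt W γ x (k0+t) M := phi_mono hW hx hγ hMt
    have hcount : (range (t+1)).filter (fun j => Wit G W γ x (k0+j) M)
        = if Wit G W γ x (k0+t) M
          then insert t ((range t).filter fun j => Wit G W γ x (k0+j) M)
          else (range t).filter fun j => Wit G W γ x (k0+j) M := by
      rw [Finset.range_add_one, Finset.filter_insert]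
    by_cases hw : Wit G W γ x (k0+t) M
    · have hdec : phiAt W γ x (k0+t+1) M
          ≤ phiAt W γ x (k0+t) M - min γ (deltaMin' G W) :=
        phi_wit_decr hW hx hγ hMt hw
      rw [hcount, if_pos hw]
      have hnotmem : t ∉ (range t).filter fun j => Wit G W γ x (k0+j) M := by
        intro h
        rw [Finset.mem_filter, Finset.mem_range] at h
        omega
      rw [Finset.card_insert_of_notMem hnotmem]
      push_cast
      have heqt : k0 + t + 1 = k0 + (t+1) := by omega
      rw [heqt] at hdec
      linarith
    · rw [hcount, if_neg hw]
      have heqt : k0 + t + 1 = k0 + (t+1) := by omega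
      rw [heqt] at hstep
      linarith

end Final
end QL6
namespace QL6
open scoped Classical
section Count
open Finset
variable {n : ℕ} {G : SimpleGraph (Fin n)} {W : Matrix (Fin n) (Fin n) ℝ}
  {x : ℕ → Fin n → ℝ} {γ : ℝ}

lemma gapcount (k0 N T0 : ℕ) (M : ℤ)
    (hpassive : ∀ a' s : ℕ, k0 ≤ a' → a' + s ≤ k0 + N →
      (∀ j, j < s → ¬ Wit G W γ x (a'+j) M) → s ≤ T0) :
    ∀ t a', k0 ≤ a' → a' + t ≤ k0 + N →
      t ≤ (((range t).filter fun j => Wit G W γ x (a'+j) M)).card * (T0 + 1) + T0 := by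
  intro t
  induction t using Nat.strong_induction_on with
  | _ t ih =>
    intro a' h1 h2
    by_cases hex : ∃ j, j < t ∧ Wit G W γ x (a'+j) M
    · set s := Nat.find hex with hsdef
      have hs := Nat.find_spec hex
      have hmin : ∀ j, j < s → ¬ Wit G W γ x (a'+j) M := by
        intro j hj hw
        exact (Nat.find_min hex hj) ⟨by omega, hw⟩
      have hsT : s ≤ T0 := hpassive a' s h1 (by omega) hmin
      set t' := t - s - 1 with ht'def
      have ht'lt : t' < t := by omega
      have hIH := ih t' ht'lt (a' + s + 1) (by omega) (by omega)
      set Wc' := ((range t').filter fun j => Wit G W γ x (a'+s+1+j) M).card with hWc'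
      set Wc := ((range t).filter fun j => Wit G W γ x (a'+j) M).card with hWcdef
      have hWrel : Wc' + 1 ≤ Wc := by
        have himg : insert s (((range t').filter fun j => Wit G W γ x (a'+s+1+j) M).image
            (fun j => s+1+j)) ⊆ (range t).filter fun j => Wit G W γ x (a'+j) M := by
          intro z hz
          rw [Finset.mem_insert] at hz
          rcases hz with rfl | hz
          · rw [mem_filter, mem_range]; exact ⟨hs.1, hs.2⟩
          · rw [Finset.mem_image] at hz
            obtain ⟨j, hj, rfl⟩ := hz
            rw [mem_filter, mem_range] at hj ⊢
            constructor
            · omega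
            · have he : a' + (s+1+j) = a' + s + 1 + j := by omega
              rw [he]; exact hj.2
        have hnot : s ∉ (((range t').filter fun j => Wit G W γ x (a'+s+1+j) M).image
            (fun j => s+1+j)) := by
          intro h
          rw [Finset.mem_image] at h
          obtain ⟨j, _, hj⟩ := h
          omega
        have hcardimg : ((((range t').filter fun j => Wit G W γ x (a'+s+1+j) M)).image
            (fun j => s+1+j)).card = Wc' :=
          Finset.card_image_of_injective _ (fun a b h => by omega)
        calc Wc' + 1 = (insert s (((range t').filter fun j => Wit G W γ x (a'+s+1+j) M).image
              (fun j => s+1+j))).card := by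
              rw [Finset.card_insert_of_notMem hnot, hcardimg]
          _ ≤ Wc := Finset.card_le_card himg
      have hstep1 : t = s + 1 + t' := by omega
      have hstep2 : (Wc' + 1) * (T0 + 1) = Wc' * (T0+1) + (T0 + 1) := by ring
      have hstep3 : (Wc' + 1) * (T0 + 1) ≤ Wc * (T0 + 1) := Nat.mul_le_mul_right _ hWrel
      calc t = s + 1 + t' := hstep1
        _ ≤ T0 + 1 + (Wc' * (T0+1) + T0) := by
            have := Nat.add_le_add (Nat.add_le_add_right hsT 1) hIH
            omega
        _ = (Wc' + 1) * (T0 + 1) + T0 := by rw [hstep2]; omega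
        _ ≤ Wc * (T0 + 1) + T0 := Nat.add_le_add_right hstep3 T0
    · push_neg at hex
      have := hpassive a' t h1 h2 hex
      omega

lemma const_ineq (hW : Assumption1 G W) (hγ : GammaSetup W x γ) (hG : G.Connected)
    (hn : 1 < n) :
    3*(n:ℝ)*((1 + 1/(2*deltaMin' G W))^(n-2) - 1) + 2
      ≤ (n:ℝ)*(1 + 1/(2*deltaMin' G W))^(n-1) := by
  set δ := deltaMin' G W with hδdef
  have hδ : 0 < δ := delta_pos hW hG hn
  have hρ0 : (0:ℝ) ≤ 1/(2*δ) := by positivity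
  rcases Nat.lt_or_ge n 3 with h3 | h3
  · have hn2 : n = 2 := by omega
    subst hn2
    norm_num
    linarith
  · have hγ0 : (0:ℝ) < γ := hγ.1
    have hρ2 : (2:ℝ) ≤ 1/(2*δ) := by
      have hq := delta_le_quarter hW hγ hG h3
      rw [le_div_iff₀ (by linarith : (0:ℝ) < 2*δ)]
      rw [← hδdef] at hq
      linarith
    have hA1 : (1:ℝ) ≤ (1 + 1/(2*δ))^(n-2) := by
      calc (1:ℝ) = 1^(n-2) := (one_pow _).symm
        _ ≤ (1 + 1/(2*δ))^(n-2) := pow_le_pow_left₀ (by norm_num) (by linarith) _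
    have hsucc : n - 1 = (n-2) + 1 := by omega
    rw [hsucc, pow_succ]
    have hn3 : (3:ℝ) ≤ (n:ℝ) := by exact_mod_cast h3
    have hA0 : (0:ℝ) ≤ (1 + 1/(2*δ))^(n-2) := by positivity
    have hkey : 0 ≤ (n:ℝ) * ((1 + 1/(2*δ))^(n-2)) * (1/(2*δ) - 2) :=
      mul_nonneg (mul_nonneg (by positivity) hA0) (by linarith)
    nlinarith [hkey, hA1, hn3]

end Count
end QL6

/-- Lemma 6: bounded time until the upper sets empty or the minimum level increases. -/
theorem bounded_time_upper_sets {n : ℕ} (hn : 1 < n)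
    (G : SimpleGraph (Fin n)) (hG : G.Connected)
    (W : Matrix (Fin n) (Fin n) ℝ) (hW : Assumption1 G W)
    (x : ℕ → Fin n → ℝ) (hx : Traj W x)
    (γ : ℝ) (hγ : GammaSetup W x γ)
    (k0 : ℕ) :
    ∃ k1 : ℕ, k0 ≤ k1 ∧
      (k1 : ℝ) ≤ (k0 : ℝ) + (n : ℝ) *
        (Vfun (Nat.zero_lt_one.trans hn) W γ x k0 / min γ (deltaMin G W) + 1) *
        (1 / (2 * deltaMin G W) + 1) ^ (n - 1) ∧
      ∀ k, k1 ≤ k →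
        (∀ i, x k i ≤ (mfun (Nat.zero_lt_one.trans hn) x k : ℝ) + 1 + alpha W γ i) ∨
        mfun (Nat.zero_lt_one.trans hn) x k0 < mfun (Nat.zero_lt_one.trans hn) x k := by
  classical
  set hn0 : 0 < n := Nat.zero_lt_one.trans hn with hhn0
  set δ : ℝ := deltaMin G W with hδdef
  have hδeq : δ = QL6.deltaMin' G W := rfl
  have hδpos : 0 < δ := by rw [hδeq]; exact QL6.delta_pos hW hG hn
  have hγpos : 0 < γ := hγ.1
  set β : ℝ := min γ δ with hβdef
  have hβpos : 0 < β := lt_min hγpos hδpos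
  set V0 : ℝ := Vfun hn0 W γ x k0 with hV0def
  have hV0 : 0 ≤ V0 := Finset.sum_nonneg fun i _ => le_max_right _ _
  set M : ℤ := mfun hn0 x k0 with hMdef
  have hA1 : (1:ℝ) ≤ (1 + 1/(2*δ))^(n-2) := by
    have hρ0 : (0:ℝ) ≤ 1/(2*δ) := by positivity
    calc (1:ℝ) = 1^(n-2) := (one_pow _).symm
      _ ≤ (1 + 1/(2*δ))^(n-2) := pow_le_pow_left₀ (by norm_num) (by linarith) _
  set Tm : ℝ := 3*(n:ℝ)*((1 + 1/(2*δ))^(n-2) - 1) with hTmdef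
  have hTm0 : 0 ≤ Tm := by
    rw [hTmdef]
    have h1 : (0:ℝ) ≤ (1 + 1/(2*δ))^(n-2) - 1 := by linarith
    have h2 : (0:ℝ) ≤ 3*(n:ℝ) := by positivity
    exact mul_nonneg h2 h1
  set T0 : ℕ := ⌊Tm⌋₊ with hT0def
  set B : ℝ := (n:ℝ) * (V0 / β + 1) * (1/(2*δ) + 1)^(n-1) with hBdef
  have hq0 : (0:ℝ) ≤ V0/β := div_nonneg hV0 hβpos.le
  have hBalt : B = (n:ℝ) * (V0/β + 1) * (1 + 1/(2*δ))^(n-1) := by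
    rw [hBdef, add_comm (1/(2*δ)) 1]
  have hB0 : 0 ≤ B := by
    have h2 : (0:ℝ) ≤ (1/(2*δ)+1)^(n-1) := by positivity
    exact mul_nonneg (mul_nonneg (Nat.cast_nonneg n) (by linarith)) h2
  set N : ℕ := ⌊B⌋₊ with hNdef
  have hfind : ∃ j, j ≤ N ∧
      ((∀ i, x (k0+j) i ≤ (mfun hn0 x (k0+j) : ℝ) + 1 + alpha W γ i)
        ∨ mfun hn0 x k0 < mfun hn0 x (k0+j)) := by
    by_contra hbad
    push_neg at hbad
    have hconstm : ∀ j, j ≤ N → mfun hn0 x (k0+j) = M := by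
      intro j hj
      have h1 := (hbad j hj).2
      have h2 : M ≤ mfun hn0 x (k0+j) := by
        rw [hMdef]
        exact QL6.m_mono_le hn0 hW hx (Nat.le_add_right k0 j)
      omega
    have hMle : ∀ j, j ≤ N → ∀ i, M ≤ ⌊x (k0+j) i⌋ := by
      intro j hj i
      rw [← hconstm j hj]
      exact QL6.m_le_floor hn0 (k0+j) i
    have hH : ∀ j, j ≤ N → ∃ i, QL6.isH W γ x (k0+j) M i := by
      intro j hj
      obtain ⟨i, hi⟩ := (hbad j hj).1
      refine ⟨i, ?_⟩
      rw [QL6.isH, ← hconstm j hj]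
      exact hi
    have hpassive : ∀ a' s : ℕ, k0 ≤ a' → a' + s ≤ k0 + N →
        (∀ jj, jj < s → ¬ QL6.Wit G W γ x (a'+jj) M) → s ≤ T0 := by
      intro a' s ha hs hnw
      have hmm' : ∀ k, a' ≤ k → k ≤ a' + s → mfun hn0 x k = M := by
        intro k h1 h2
        have h3 : k = k0 + (k - k0) := by omega
        rw [h3]
        exact hconstm (k - k0) (by omega)
      have hnw' : ∀ k, a' ≤ k → k < a' + s → ¬ QL6.Wit G W γ x k M := by
        intro k h1 h2
        have h3 : k = a' + (k - a') := by omega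
        rw [h3]
        exact hnw (k - a') (by omega)
      have hHne : ∃ i, QL6.isH W γ x a' M i := by
        have h3 : a' = k0 + (a' - k0) := by omega
        rw [h3]
        exact hH (a' - k0) (by omega)
      have hrb := QL6.run_bound hW hx hγ hG hn hn0 hmm' hnw' (Nat.le_add_right a' s) hHne
      have h4 : a' + s - a' = s := by omega
      rw [h4] at hrb
      rw [← hδeq] at hrb
      apply Nat.le_floor
      rw [hTmdef]
      exact hrb
    set Wc : ℕ := ((Finset.range N).filter fun j => QL6.Wit G W γ x (k0+j) M).card with hWcdef
    have hwin := QL6.phi_window hW hx hγ k0 N M hMle N (le_refl N)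
    have hphiN := QL6.phi_nonneg (W := W) (γ := γ) (x := x) (k := k0+N) (M := M)
    have hphiV : QL6.phiAt W γ x k0 M ≤ V0 := by
      rw [hMdef, hV0def]
      exact QL6.phi_le_V hn0 k0
    have hWcle : (Wc:ℝ) ≤ V0 / β := by
      rw [le_div_iff₀ hβpos]
      have hβeq : min γ (QL6.deltaMin' G W) = β := by rw [hβdef, hδeq]
      rw [hβeq, ← hWcdef] at hwin
      linarith
    have hgap := QL6.gapcount k0 N T0 M hpassive N k0 (le_refl k0) (le_refl (k0+N))
    rw [← hWcdef] at hgap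
    have hgapR : (N:ℝ) ≤ (Wc:ℝ) * ((T0:ℝ)+1) + (T0:ℝ) := by exact_mod_cast hgap
    have hT0le : (T0:ℝ) ≤ Tm := Nat.floor_le hTm0
    have hconstI := QL6.const_ineq (x := x) hW hγ hG hn
    rw [← hδeq, ← hTmdef] at hconstI
    have hWcT : (Wc:ℝ) * ((T0:ℝ)+1) ≤ (V0/β) * (Tm+1) :=
      mul_le_mul hWcle (by linarith) (by positivity) hq0
    have hre : (V0/β + 1)*(Tm+1) - 1 = (V0/β)*(Tm+1) + Tm := by ring
    have hNle : (N:ℝ) ≤ (V0/β + 1) * (Tm + 1) - 1 := by linarith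
    have h2 : (Tm + 1) ≤ (n:ℝ)*(1+1/(2*δ))^(n-1) - 1 := by linarith
    have h3 : (V0/β + 1) * (Tm + 1) ≤ (V0/β + 1) * ((n:ℝ)*(1+1/(2*δ))^(n-1) - 1) :=
      mul_le_mul_of_nonneg_left h2 (by linarith)
    have h4 : (V0/β + 1) * ((n:ℝ)*(1+1/(2*δ))^(n-1)) = B := by rw [hBalt]; ring
    have hflo : B < (N:ℝ) + 1 := Nat.lt_floor_add_one B
    have hexp : (V0/β + 1) * ((n:ℝ)*(1+1/(2*δ))^(n-1) - 1)
        = B - (V0/β + 1) := by rw [← h4]; ring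
    linarith
  obtain ⟨j, hjN, hRj⟩ := hfind
  refine ⟨k0 + j, Nat.le_add_right _ _, ?_, ?_⟩
  · have h1 : (j:ℝ) ≤ (N:ℝ) := by exact_mod_cast hjN
    have h2 : (N:ℝ) ≤ B := Nat.floor_le hB0
    have h3 : ((k0 + j : ℕ):ℝ) = (k0:ℝ) + (j:ℝ) := by push_cast; ring
    rw [h3]
    linarith
  · intro k hk
    exact QL6.R_propagate hW hx hγ hn0 k0 (k0+j) (Nat.le_add_right _ _) hRj k hk
end

section
/- Proposition 2 (the upper sets empty in finite time): under Assumption 1 and the γ/α setup, for every initial vector x(0) ∈ ℝ^n there exists a finite time K such that for all k ≥ K, X4(k) ∪ X5(k) ∪ X6(k) = ∅, i.e. x_i(k) ≤ m(k) + 1 + α_i for every agent i. -/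
open Finset Filter

theorem mfun_le_floor {n : ℕ} (hn : 0 < n) (x : ℕ → Fin n → ℝ) (k : ℕ) (i : Fin n) :
    mfun hn x k ≤ ⌊x k i⌋ := Finset.inf'_le _ (mem_univ i)

theorem floor_le_Mfun {n : ℕ} (hn : 0 < n) (x : ℕ → Fin n → ℝ) (k : ℕ) (i : Fin n) :
    ⌊x k i⌋ ≤ Mfun hn x k := Finset.le_sup' (fun i => ⌊x k i⌋) (mem_univ i)

theorem mfun_le_x {n : ℕ} (hn : 0 < n) (x : ℕ → Fin n → ℝ) (k : ℕ) (i : Fin n) :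
    (mfun hn x k : ℝ) ≤ x k i := by
  have h1 : (mfun hn x k : ℝ) ≤ (⌊x k i⌋ : ℝ) := by exact_mod_cast mfun_le_floor hn x k i
  have := Int.floor_le (x k i); linarith

theorem x_lt_Mfun {n : ℕ} (hn : 0 < n) (x : ℕ → Fin n → ℝ) (k : ℕ) (i : Fin n) :
    x k i < (Mfun hn x k : ℝ) + 1 := by
  have h1 : ((⌊x k i⌋:ℤ) : ℝ) ≤ ((Mfun hn x k : ℤ) : ℝ) := by exact_mod_cast floor_le_Mfun hn x k i
  have := Int.lt_floor_add_one (x k i); linarith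

theorem mfun_succ {n : ℕ} (hn : 0 < n) {W : Matrix (Fin n) (Fin n) ℝ}
    (hnn : ∀ i j, 0 ≤ W i j) (hrow : ∀ i, ∑ j, W i j = 1)
    {x : ℕ → Fin n → ℝ} (hx : Traj W x) (k : ℕ) :
    mfun hn x k ≤ mfun hn x (k+1) := by
  apply Finset.le_inf'
  intro i _
  rw [Int.le_floor]
  rw [hx k i]
  have h1 : ∑ j, W i j * ((mfun hn x k : ℤ) : ℝ) ≤ ∑ j, W i j * (⌊x k j⌋ : ℝ) :=
    Finset.sum_le_sum (fun j _ => mul_le_mul_of_nonneg_left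
      (by exact_mod_cast mfun_le_floor hn x k j) (hnn i j))
  have h2 : ∑ j, W i j * ((mfun hn x k : ℤ) : ℝ) = (mfun hn x k : ℝ) := by
    rw [← Finset.sum_mul, hrow, one_mul]
  have h3 := Int.floor_le (x k i)
  linarith
theorem Mfun_succ {n : ℕ} (hn : 0 < n) {W : Matrix (Fin n) (Fin n) ℝ}
    (hnn : ∀ i j, 0 ≤ W i j) (hrow : ∀ i, ∑ j, W i j = 1)
    {x : ℕ → Fin n → ℝ} (hx : Traj W x) (k : ℕ) :
    Mfun hn x (k+1) ≤ Mfun hn x k := by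
  apply Finset.sup'_le
  intro i _
  have : x (k+1) i < (Mfun hn x k : ℝ) + 1 := by
    rw [hx k i]
    have h1 : ∑ j, W i j * (⌊x k j⌋ : ℝ) ≤ ∑ j, W i j * ((Mfun hn x k : ℤ) : ℝ) :=
      Finset.sum_le_sum (fun j _ => mul_le_mul_of_nonneg_left
        (by exact_mod_cast floor_le_Mfun hn x k j) (hnn i j))
    have h2 : ∑ j, W i j * ((Mfun hn x k : ℤ) : ℝ) = (Mfun hn x k : ℝ) := by
      rw [← Finset.sum_mul, hrow, one_mul]
    have h3 := Int.lt_floor_add_one (x k i)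
    linarith
  have h4 : ⌊x (k+1) i⌋ < Mfun hn x k + 1 := by
    rw [Int.floor_lt]; push_cast; exact this
  omega

theorem mfun_mono {n : ℕ} (hn : 0 < n) {W : Matrix (Fin n) (Fin n) ℝ}
    (hnn : ∀ i j, 0 ≤ W i j) (hrow : ∀ i, ∑ j, W i j = 1)
    {x : ℕ → Fin n → ℝ} (hx : Traj W x) {a b : ℕ} (hab : a ≤ b) :
    mfun hn x a ≤ mfun hn x b := by
  induction b, hab using Nat.le_induction with
  | base => exact le_refl _
  | succ b hab ih => exact le_trans ih (mfun_succ hn hnn hrow hx b)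

theorem Mfun_mono {n : ℕ} (hn : 0 < n) {W : Matrix (Fin n) (Fin n) ℝ}
    (hnn : ∀ i j, 0 ≤ W i j) (hrow : ∀ i, ∑ j, W i j = 1)
    {x : ℕ → Fin n → ℝ} (hx : Traj W x) {a b : ℕ} (hab : a ≤ b) :
    Mfun hn x b ≤ Mfun hn x a := by
  induction b, hab using Nat.le_induction with
  | base => exact le_refl _
  | succ b hab ih => exact le_trans (Mfun_succ hn hnn hrow hx b) ih

theorem ratsum {α : Type*} (s : Finset α) (f : α → ℝ)
    (h : ∀ j ∈ s, ∃ q : ℚ, (q:ℝ) = f j) : ∃ q : ℚ, (q:ℝ) = ∑ j ∈ s, f j := by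
  classical
  induction s using Finset.induction_on with
  | empty => exact ⟨0, by simp⟩
  | insert a s hnotmem ih =>
    obtain ⟨q1, hq1⟩ := h a (mem_insert_self a s)
    obtain ⟨q2, hq2⟩ := ih (fun j hj => h j (mem_insert_of_mem hj))
    exact ⟨q1 + q2, by rw [Finset.sum_insert hnotmem]; push_cast; rw [hq1, hq2]⟩

theorem exists_denom {n : ℕ} (G : SimpleGraph (Fin n)) (W : Matrix (Fin n) (Fin n) ℝ)
    (hW : Assumption1 G W) : ∃ D : ℕ, 0 < D ∧ ∀ i j, ∃ z : ℤ, W i j * (D:ℝ) = (z:ℝ) := by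
  classical
  obtain ⟨hsymm, hnn, hrow, hhalf, hnadj, hadj⟩ := hW
  have hQoff : ∀ i j, i ≠ j → ∃ q : ℚ, (q:ℝ) = W i j := by
    intro i j hne
    by_cases h : G.Adj i j
    · exact (hadj i j h).1
    · exact ⟨0, by rw [hnadj i j hne h]; norm_num⟩
  have hQ : ∀ i j, ∃ q : ℚ, (q:ℝ) = W i j := by
    intro i j
    by_cases h : i = j
    · subst h
      have hsum : W i i + ∑ j ∈ univ.erase i, W i j = 1 := by
        rw [Finset.add_sum_erase univ (fun j => W i j) (mem_univ i)]
        exact hrow i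
      obtain ⟨q, hq⟩ := ratsum (univ.erase i) (fun j => W i j)
        (fun j hj => hQoff i j (Finset.ne_of_mem_erase hj).symm)
      exact ⟨1 - q, by push_cast; rw [hq]; linarith⟩
    · exact hQoff i j h
  choose Q hQ' using hQ
  refine ⟨∏ i, ∏ j, (Q i j).den, Finset.prod_pos (fun i _ => Finset.prod_pos
    (fun j _ => (Q i j).pos)), ?_⟩
  intro i j
  have hdvd : (Q i j).den ∣ ∏ i, ∏ j, (Q i j).den :=
    dvd_trans (Finset.dvd_prod_of_mem (fun j' => (Q i j').den) (mem_univ j))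
      (Finset.dvd_prod_of_mem (fun i' => ∏ j', (Q i' j').den) (mem_univ i))
  set D := ∏ i, ∏ j, (Q i j).den with hDdef
  refine ⟨(Q i j).num * ((D / (Q i j).den : ℕ) : ℤ), ?_⟩
  have hden0 : ((Q i j).den : ℝ) ≠ 0 := by
    exact_mod_cast (Q i j).den_nz
  have hDsplit : (D : ℝ) = ((Q i j).den : ℝ) * ((D / (Q i j).den : ℕ) : ℝ) := by
    exact_mod_cast congrArg (Nat.cast (R := ℝ)) (Nat.mul_div_cancel' hdvd).symm
  rw [← hQ' i j, Rat.cast_def, hDsplit]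
  push_cast
  field_simp
  rw [← Int.natCast_div, Int.cast_natCast]

theorem step_identity {n : ℕ} {W : Matrix (Fin n) (Fin n) ℝ} (hrow : ∀ i, ∑ j, W i j = 1)
    {x : ℕ → Fin n → ℝ} (hx : Traj W x) (k : ℕ) (i : Fin n) :
    x (k+1) i = x k i + ∑ l, W i l * ((⌊x k l⌋ : ℝ) - (⌊x k i⌋ : ℝ)) := by
  have h1 : ∀ l, W i l * ((⌊x k l⌋:ℝ) - (⌊x k i⌋:ℝ))
      = W i l * (⌊x k l⌋ : ℝ) - W i l * (⌊x k i⌋ : ℝ) := fun l => by ring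
  rw [Finset.sum_congr rfl (fun l _ => h1 l), Finset.sum_sub_distrib, ← Finset.sum_mul,
    hrow, hx k i]; ring

theorem traj_lattice {n : ℕ} {W : Matrix (Fin n) (Fin n) ℝ} (hrow : ∀ i, ∑ j, W i j = 1)
    {x : ℕ → Fin n → ℝ} (hx : Traj W x) {D : ℕ} (hD0 : 0 < D)
    (hD : ∀ i j, ∃ z : ℤ, W i j * (D:ℝ) = (z:ℝ)) :
    ∀ k i, ∃ z : ℤ, x k i = x 0 i + (z:ℝ)/(D:ℝ) := by
  choose zw hzw using hD
  have hDne : (D:ℝ) ≠ 0 := by positivity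
  intro k
  induction k with
  | zero => exact fun i => ⟨0, by norm_num⟩
  | succ k ih =>
    intro i
    obtain ⟨z, hz⟩ := ih i
    refine ⟨z + ∑ l, zw i l * (⌊x k l⌋ - ⌊x k i⌋), ?_⟩
    have hterm : ∀ l, W i l * ((⌊x k l⌋:ℝ) - (⌊x k i⌋:ℝ))
        = ((zw i l * (⌊x k l⌋ - ⌊x k i⌋) : ℤ) : ℝ) / (D:ℝ) := by
      intro l
      rw [eq_div_iff hDne]
      push_cast
      linear_combination ((⌊x k l⌋:ℝ) - (⌊x k i⌋:ℝ)) * hzw i l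
    rw [step_identity hrow hx k i, Finset.sum_congr rfl (fun l _ => hterm l),
      ← Finset.sum_div, hz]
    push_cast
    ring

theorem exists_period {n : ℕ} (hn : 0 < n) (G : SimpleGraph (Fin n))
    (W : Matrix (Fin n) (Fin n) ℝ) (hW : Assumption1 G W)
    (x : ℕ → Fin n → ℝ) (hx : Traj W x) :
    ∃ k1 p : ℕ, 0 < p ∧ ∀ t, x (k1 + t + p) = x (k1 + t) := by
  classical
  obtain ⟨D, hD0, hD⟩ := exists_denom G W hW
  have hDne : (D:ℝ) ≠ 0 := by positivity
  have hlat := traj_lattice hW.2.2.1 hx hD0 hD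
  -- bounds
  set m0 : ℤ := Finset.univ.inf' ⟨⟨0, hn⟩, Finset.mem_univ _⟩ (fun i => ⌊x 0 i⌋) with hm0
  set M0 : ℤ := Finset.univ.sup' ⟨⟨0, hn⟩, Finset.mem_univ _⟩ (fun i => ⌊x 0 i⌋) with hM0
  have hlo : ∀ k i, (m0:ℝ) ≤ x k i := by
    intro k i
    have h1 : m0 ≤ mfun hn x k := mfun_mono hn hW.2.1 hW.2.2.1 hx (Nat.zero_le k)
    have h2 := mfun_le_x hn x k i
    have : (m0 : ℝ) ≤ (mfun hn x k : ℝ) := by exact_mod_cast h1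
    linarith
  have hhi : ∀ k i, x k i < (M0:ℝ) + 1 := by
    intro k i
    have h1 : Mfun hn x k ≤ M0 := Mfun_mono hn hW.2.1 hW.2.2.1 hx (Nat.zero_le k)
    have h2 := x_lt_Mfun hn x k i
    have : (Mfun hn x k : ℝ) ≤ (M0 : ℝ) := by exact_mod_cast h1
    linarith
  -- encoding
  set e : ℕ → Fin n → ℤ := fun k i => ⌊(x k i - x 0 i) * (D:ℝ)⌋ with hedef
  have hkey : ∀ k i, x k i = x 0 i + ((e k i : ℝ))/(D:ℝ) := by
    intro k i
    obtain ⟨z, hz⟩ := hlat k i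
    have hzz : (x k i - x 0 i) * (D:ℝ) = (z:ℝ) := by
      rw [hz]; field_simp; ring
    have : e k i = z := by
      simp only [hedef, hzz, Int.floor_intCast]
    rw [this, ← hzz]; field_simp; ring
  have heq : ∀ k k', e k = e k' → x k = x k' := by
    intro k k' h
    funext i
    rw [hkey k i, hkey k' i, h]
  set lo : ℤ := (m0 - M0 - 1) * D with hlodef
  set hi : ℤ := (M0 + 1 - m0) * D with hhidef
  have hmem : ∀ k i, e k i ∈ Finset.Icc lo hi := by
    intro k i
    rw [Finset.mem_Icc]
    have hD0R : (0:ℝ) < (D:ℝ) := by exact_mod_cast hD0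
    have h1 : ((m0:ℝ) - M0 - 1) * D ≤ (x k i - x 0 i) * D := by
      have := hlo k i; have := hhi 0 i
      nlinarith
    have h2 : (x k i - x 0 i) * D ≤ ((M0:ℝ) + 1 - m0) * D := by
      have := hhi k i; have := hlo 0 i
      nlinarith
    constructor
    · rw [hlodef, Int.le_floor]; push_cast; exact_mod_cast h1
    · have : e k i ≤ hi ↔ ((e k i):ℝ) ≤ (hi:ℝ) := by exact_mod_cast Iff.rfl
      rw [this]
      have hfl : ((e k i):ℝ) ≤ (x k i - x 0 i) * D := Int.floor_le _
      rw [hhidef]; push_cast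
      linarith
  -- pigeonhole
  set f : ℕ → (Fin n → (Finset.Icc lo hi : Finset ℤ)) :=
    fun k i => ⟨e k i, hmem k i⟩ with hfdef
  obtain ⟨a, b, hne, hfeq⟩ := Finite.exists_ne_map_eq_of_infinite f
  have heab : e a = e b := by
    funext i
    exact congrArg Subtype.val (congrFun hfeq i)
  have hxab : x a = x b := heq a b heab
  have hdet : ∀ u v : ℕ, x u = x v → x (u+1) = x (v+1) := by
    intro u v h
    funext i
    rw [hx u i, hx v i, h]
  rcases Nat.lt_or_ge a b with hab | hab
  · refine ⟨a, b - a, by omega, ?_⟩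
    have hshift : ∀ t, x (a + t) = x (b + t) := by
      intro t
      induction t with
      | zero => simpa using hxab
      | succ t ih =>
        have : a + (t+1) = (a + t) + 1 := by omega
        rw [this, show b + (t+1) = (b + t) + 1 by omega]
        exact hdet _ _ ih
    intro t
    have h1 : a + t + (b - a) = b + t := by omega
    rw [h1]
    exact (hshift t).symm
  · have hba : b < a := by omega
    refine ⟨b, a - b, by omega, ?_⟩
    have hshift : ∀ t, x (b + t) = x (a + t) := by
      intro t
      induction t with
      | zero => simpa using hxab.symm
      | succ t ih =>
        rw [show b + (t+1) = (b + t) + 1 by omega, show a + (t+1) = (a + t) + 1 by omega]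
        exact hdet _ _ ih
    intro t
    have h1 : b + t + (a - b) = a + t := by omega
    rw [h1]
    exact (hshift t).symm

/-- Key one-step estimate: with `θ i = m + 2 - w_ii + γ` and `Φ k = Σ max(x k i - θ i, 0)`,
we have `Φ(k+1) ≤ Φ(k)`, and strict decrease by `γ` if any node crosses the θ-boundary. -/
theorem keyStep {n : ℕ} (W : Matrix (Fin n) (Fin n) ℝ)
    (hsymm : ∀ i j, W i j = W j i) (hnn : ∀ i j, 0 ≤ W i j) (hrow : ∀ i, ∑ j, W i j = 1)
    (x : ℕ → Fin n → ℝ) (hx : Traj W x) (γ : ℝ) (hγ : GammaSetup W x γ) (m : ℤ) (k : ℕ) :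
    (∑ i, max (x (k+1) i - ((m:ℝ) + 2 - W i i + γ)) 0) ≤
      ∑ i, max (x k i - ((m:ℝ) + 2 - W i i + γ)) 0 ∧
    (∀ i0, ¬(((m:ℝ) + 2 - W i0 i0 + γ < x k i0) ↔ ((m:ℝ) + 2 - W i0 i0 + γ < x (k+1) i0)) →
      (∑ i, max (x (k+1) i - ((m:ℝ) + 2 - W i i + γ)) 0) + γ ≤
        ∑ i, max (x k i - ((m:ℝ) + 2 - W i i + γ)) 0) := by
  classical
  obtain ⟨hγ0, hgap⟩ := hγ
  set θ : Fin n → ℝ := fun i => (m:ℝ) + 2 - W i i + γ with hθdef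
  set Y : Fin n → ℝ := fun i => ((⌊x k i⌋ : ℝ) - m) with hYdef
  set A : Finset (Fin n) := univ.filter (fun i => θ i < x k i) with hAdef
  have hmemA : ∀ i, i ∈ A ↔ θ i < x k i := by
    intro i; simp [hAdef]
  have hmemAc : ∀ i, i ∈ Aᶜ ↔ ¬ θ i < x k i := by
    intro i; simp [hAdef]
  have hw1 : ∀ i, W i i ≤ 1 := by
    intro i
    calc W i i ≤ ∑ j, W i j := Finset.single_le_sum (fun j _ => hnn i j) (mem_univ i)
    _ = 1 := hrow i
  have hw2 : ∀ i, 1/2 + 2*γ ≤ W i i := by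
    intro i; have := (hgap i k).2.2.2; linarith
  have hc0 : ∀ (t : ℕ) i, 0 ≤ x t i - ⌊x t i⌋ := by
    intro t i; have := Int.floor_le (x t i); linarith
  have hc1 : ∀ (t : ℕ) i, x t i - ⌊x t i⌋ < 1 := by
    intro t i; have := Int.lt_floor_add_one (x t i); linarith
  -- step identity
  have hstep : ∀ i, x (k+1) i = x k i + ∑ l, W i l * (Y l - Y i) := by
    intro i
    have h1 : ∀ l, W i l * (Y l - Y i) = W i l * (⌊x k l⌋ : ℝ) - W i l * (⌊x k i⌋ : ℝ) := by
      intro l; simp only [hYdef]; ring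
    rw [Finset.sum_congr rfl (fun l _ => h1 l), Finset.sum_sub_distrib, ← Finset.sum_mul,
      hrow, hx k i]; ring
  -- floor facts
  have hYA : ∀ i ∈ A, (1:ℝ) ≤ Y i := by
    intro i hi
    rw [hmemA] at hi
    have h2 : (m:ℝ) + 1 < x k i := by
      have := hw1 i; simp only [hθdef] at hi; linarith
    have : m + 1 ≤ ⌊x k i⌋ := by rw [Int.le_floor]; push_cast; linarith
    simp only [hYdef]
    have : ((m:ℝ) + 1) ≤ (⌊x k i⌋ : ℝ) := by exact_mod_cast this
    linarith
  have hYc : ∀ i ∈ Aᶜ, Y i ≤ 1 := by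
    intro i hi
    rw [hmemAc] at hi
    have h2 : x k i < (m:ℝ) + 2 := by
      have := hw2 i; simp only [hθdef] at hi; push_neg at hi; linarith
    have : ⌊x k i⌋ ≤ m + 1 := by
      have : ⌊x k i⌋ < m + 2 := by rw [Int.floor_lt]; push_cast; linarith
      omega
    simp only [hYdef]
    have : ((⌊x k i⌋:ℝ)) ≤ (m:ℝ) + 1 := by exact_mod_cast this
    linarith
  -- integer floor value
  have hYint : ∀ i, Y i = ((⌊x k i⌋ - m : ℤ) : ℝ) := by intro i; simp [hYdef]
  -- The two per-node estimates
  have hU1 : ∀ i ∈ A, θ i - x (k+1) i ≤ (∑ l ∈ Aᶜ, W i l * (1 - Y l)) - γ := by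
    intro i hi
    have hx' := hstep i
    have hsplit : ∑ l, W i l * (Y l - Y i)
        = ∑ l ∈ A, W i l * (Y l - Y i) + ∑ l ∈ Aᶜ, W i l * (Y l - Y i) :=
      (Finset.sum_add_sum_compl A _).symm
    -- A-part lower bound
    have hAA : (∑ l ∈ A, W i l) * (1 - Y i) + W i i * (Y i - 1)
        ≤ ∑ l ∈ A, W i l * (Y l - Y i) := by
      have e1 : ∑ l ∈ A, W i l * (Y l - Y i)
          = ∑ l ∈ A, W i l * (1 - Y i) + ∑ l ∈ A, W i l * (Y l - 1) := by
        rw [← Finset.sum_add_distrib]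
        exact Finset.sum_congr rfl (fun l _ => by ring)
      have e2 : W i i * (Y i - 1) ≤ ∑ l ∈ A, W i l * (Y l - 1) :=
        Finset.single_le_sum (f := fun l => W i l * (Y l - 1))
          (fun l hl => mul_nonneg (hnn i l) (by have := hYA l hl; linarith)) hi
      have e3 : ∑ l ∈ A, W i l * (1 - Y i) = (∑ l ∈ A, W i l) * (1 - Y i) := by
        rw [Finset.sum_mul]
      linarith [e1, e2, e3]
    -- Ac part: exact rewrite
    have hNA : ∑ l ∈ Aᶜ, (W i l * (Y l - Y i) + W i l * (1 - Y l))
        = (∑ l ∈ Aᶜ, W i l) * (1 - Y i) := by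
      rw [Finset.sum_mul]
      exact Finset.sum_congr rfl (fun l _ => by ring)
    have hall : (∑ l ∈ A, W i l) + (∑ l ∈ Aᶜ, W i l) = 1 := by
      rw [Finset.sum_add_sum_compl]; exact hrow i
    -- combine: θ i - x' i - B⁻ + γ ≤ θ i - x k i + (1 - Y i)*(W i i - 1) + γ
    have hcomb : θ i - x (k+1) i - (∑ l ∈ Aᶜ, W i l * (1 - Y l)) + γ
        ≤ θ i - x k i + (1 - Y i) * (W i i - 1) + γ := by
      have hsum2 : ∑ l ∈ Aᶜ, W i l * (Y l - Y i) + ∑ l ∈ Aᶜ, W i l * (1 - Y l)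
          = (∑ l ∈ Aᶜ, W i l) * (1 - Y i) := by
        rw [← Finset.sum_add_distrib]; exact hNA
      have hv : (∑ l ∈ A, W i l) * (1 - Y i) + (∑ l ∈ Aᶜ, W i l) * (1 - Y i) = 1 - Y i := by
        have : ((∑ l ∈ A, W i l) + (∑ l ∈ Aᶜ, W i l)) * (1 - Y i) = 1 * (1 - Y i) := by
          rw [hall]
        linarith [this]
      rw [hx', hsplit]
      linarith [hAA, hsum2, hv]
    -- final: θ i - x k i + (1 - Y i)*(W i i - 1) + γ ≤ 0
    have hfinal : θ i - x k i + (1 - Y i) * (W i i - 1) + γ ≤ 0 := by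
      have hxi : x k i = (m:ℝ) + Y i + (x k i - ⌊x k i⌋) := by
        simp only [hYdef]; ring
      -- goal ⟺ 1 + 2γ ≤ c + W i i * Y i
      have hYA' := hYA i hi
      have hYZ : (1:ℤ) ≤ ⌊x k i⌋ - m := by
        have := hYA' ; rw [hYint i] at this; exact_mod_cast this
      rcases eq_or_lt_of_le hYZ with hone | htwo
      · -- Y i = 1, use gap condition
        have hY1 : Y i = 1 := by rw [hYint i, ← hone]; norm_num
        have hfl : (⌊x k i⌋ : ℝ) = (m:ℝ) + 1 := by
          have : ⌊x k i⌋ = m + 1 := by omega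
          rw [this]; push_cast; ring
        have hcgt : x k i - (⌊x k i⌋:ℝ) > 1 - W i i := by
          rw [hmemA] at hi; simp only [hθdef] at hi
          rw [hfl]; linarith
        have := (hgap i k).1 hcgt
        rw [hfl] at this
        simp only [hθdef, hY1]; linarith
      · -- Y i ≥ 2
        have hY2 : (2:ℝ) ≤ Y i := by
          rw [hYint i]; exact_mod_cast htwo
        have hprod : (1/2 + 2*γ) * 2 ≤ W i i * Y i := by
          have h1 : 0 ≤ W i i := hnn i i
          nlinarith [hw2 i]
        have hcpos := hc0 k i
        simp only [hθdef]
        nlinarith [hxi]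
    linarith [hcomb, hfinal]
  have hU2 : ∀ j ∈ Aᶜ, x (k+1) j - θ j ≤ (∑ l ∈ A, W j l * (Y l - 1)) - γ := by
    intro j hj
    have hx' := hstep j
    have hsplit : ∑ l, W j l * (Y l - Y j)
        = ∑ l ∈ A, W j l * (Y l - Y j) + ∑ l ∈ Aᶜ, W j l * (Y l - Y j) :=
      (Finset.sum_add_sum_compl A _).symm
    have hA2 : ∑ l ∈ A, W j l * (Y l - Y j)
        = ∑ l ∈ A, W j l * (Y l - 1) + (∑ l ∈ A, W j l) * (1 - Y j) := by
      rw [Finset.sum_mul, ← Finset.sum_add_distrib]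
      exact Finset.sum_congr rfl (fun l _ => by ring)
    have hN2 : ∑ l ∈ Aᶜ, W j l * (Y l - Y j)
        ≤ (∑ l ∈ Aᶜ, W j l) * (1 - Y j) - W j j * (1 - Y j) := by
      have e1 : W j j * (1 - Y j) ≤ ∑ l ∈ Aᶜ, W j l * (1 - Y l) :=
        Finset.single_le_sum (f := fun l => W j l * (1 - Y l))
          (fun l hl => mul_nonneg (hnn j l) (by have := hYc l hl; linarith)) hj
      have e2 : ∑ l ∈ Aᶜ, W j l * (Y l - Y j) + ∑ l ∈ Aᶜ, W j l * (1 - Y l)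
          = (∑ l ∈ Aᶜ, W j l) * (1 - Y j) := by
        rw [Finset.sum_mul, ← Finset.sum_add_distrib]
        exact Finset.sum_congr rfl (fun l _ => by ring)
      linarith [e1, e2]
    have hall : ∑ l ∈ A, W j l + ∑ l ∈ Aᶜ, W j l = 1 := by
      rw [Finset.sum_add_sum_compl]; exact hrow j
    have hv : (∑ l ∈ A, W j l) * (1 - Y j) + (∑ l ∈ Aᶜ, W j l) * (1 - Y j) = 1 - Y j := by
      have : ((∑ l ∈ A, W j l) + (∑ l ∈ Aᶜ, W j l)) * (1 - Y j) = 1 * (1 - Y j) := by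
        rw [hall]
      linarith [this]
    have hcomb : x (k+1) j - θ j - (∑ l ∈ A, W j l * (Y l - 1)) + γ
        ≤ x k j - θ j + (1 - Y j) * (1 - W j j) + γ := by
      rw [hx', hsplit]
      linarith [hA2, hN2, hv]
    have hfinal : x k j - θ j + (1 - Y j) * (1 - W j j) + γ ≤ 0 := by
      have hxj : x k j = (m:ℝ) + Y j + (x k j - ⌊x k j⌋) := by
        simp only [hYdef]; ring
      have hYc' := hYc j hj
      have hYZ : ⌊x k j⌋ - m ≤ (1:ℤ) := by
        have := hYc'; rw [hYint j] at this; exact_mod_cast this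
      rcases eq_or_lt_of_le hYZ with hone | hzero
      · -- Y j = 1 : use gap condition to get c ≤ 1 - w
        have hY1 : Y j = 1 := by rw [hYint j, hone]; norm_num
        have hfl : (⌊x k j⌋ : ℝ) = (m:ℝ) + 1 := by
          have : ⌊x k j⌋ = m + 1 := by omega
          rw [this]; push_cast; ring
        have hcle : x k j - (⌊x k j⌋:ℝ) ≤ 1 - W j j := by
          by_contra hcon
          push_neg at hcon
          have h2 := (hgap j k).1 hcon
          rw [hmemAc] at hj; push_neg at hj
          simp only [hθdef] at hj
          rw [hfl] at h2; linarith
        rw [hfl] at hcle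
        simp only [hθdef, hY1]; linarith
      · -- Y j ≤ 0
        have hY0 : Y j ≤ 0 := by
          rw [hYint j]
          have : ⌊x k j⌋ - m ≤ 0 := by omega
          exact_mod_cast this
        have hwY : W j j * Y j ≤ 0 := mul_nonpos_of_nonneg_of_nonpos (hnn j j) hY0
        have := hc1 k j
        simp only [hθdef]
        nlinarith [hxj]
    linarith [hcomb, hfinal]
  -- nonnegativity of budgets
  have hBm : ∀ i, 0 ≤ ∑ l ∈ Aᶜ, W i l * (1 - Y l) :=
    fun i => Finset.sum_nonneg (fun l hl => mul_nonneg (hnn i l) (by have := hYc l hl; linarith))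
  have hBp : ∀ i, 0 ≤ ∑ l ∈ A, W i l * (Y l - 1) :=
    fun i => Finset.sum_nonneg (fun l hl => mul_nonneg (hnn i l) (by have := hYA l hl; linarith))
  -- indicator
  set χ : Fin n → ℝ := fun i => if θ i < x (k+1) i then (if i ∈ A then 0 else 1)
      else (if i ∈ A then 1 else 0) with hχdef
  have hχnn : ∀ i, 0 ≤ χ i := by
    intro i; simp only [hχdef]
    split <;> split <;> norm_num
  set E : ℝ := ∑ i, χ i with hEdef
  have hEnn : 0 ≤ E := Finset.sum_nonneg (fun i _ => hχnn i)
  -- per node bounds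
  have hb1 : ∀ i ∈ A, max (x (k+1) i - θ i) 0 + γ * χ i
      ≤ (x (k+1) i - x k i) + (x k i - θ i) + ∑ l ∈ Aᶜ, W i l * (1 - Y l) := by
    intro i hi
    have hid : max (x (k+1) i - θ i) 0 = (x (k+1) i - θ i) + max (θ i - x (k+1) i) 0 := by
      rcases le_total (x (k+1) i - θ i) 0 with h | h
      · rw [max_eq_right h, max_eq_left (by linarith)]; ring
      · rw [max_eq_left h, max_eq_right (by linarith)]; ring
    rw [hid]
    by_cases hcr : θ i < x (k+1) i
    · have hm0 : max (θ i - x (k+1) i) 0 = 0 := max_eq_right (by linarith)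
      have hχ0 : χ i = 0 := by simp only [hχdef, if_pos hcr, if_pos hi]
      rw [hm0, hχ0]
      have := hBm i; linarith
    · have hχ1 : χ i = 1 := by simp only [hχdef, if_neg hcr, if_pos hi]
      push_neg at hcr
      have hm1 : max (θ i - x (k+1) i) 0 = θ i - x (k+1) i := max_eq_left (by linarith)
      rw [hm1, hχ1]
      have := hU1 i hi; linarith
  have hb2 : ∀ i ∈ Aᶜ, max (x (k+1) i - θ i) 0 + γ * χ i
      ≤ ∑ l ∈ A, W i l * (Y l - 1) := by
    intro i hi
    have hiA : i ∉ A := by rw [Finset.mem_compl] at hi; exact hi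
    by_cases hcr : θ i < x (k+1) i
    · have hχ1 : χ i = 1 := by simp only [hχdef, if_pos hcr, if_neg hiA]
      have hm1 : max (x (k+1) i - θ i) 0 = x (k+1) i - θ i := max_eq_left (by linarith)
      rw [hm1, hχ1]
      have := hU2 i hi; linarith
    · have hχ0 : χ i = 0 := by simp only [hχdef, if_neg hcr, if_neg hiA]
      push_neg at hcr
      have hm0 : max (x (k+1) i - θ i) 0 = 0 := max_eq_right (by linarith)
      rw [hm0, hχ0]
      have := hBp i; linarith
  -- Phi at time k
  have hΦ0 : ∑ i, max (x k i - θ i) 0 = ∑ i ∈ A, (x k i - θ i) := by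
    rw [← Finset.sum_add_sum_compl A (fun i => max (x k i - θ i) 0)]
    have h1 : ∑ i ∈ Aᶜ, max (x k i - θ i) 0 = 0 :=
      Finset.sum_eq_zero (fun i hi => max_eq_right (by
        rw [hmemAc] at hi; push_neg at hi; linarith))
    have h2 : ∑ i ∈ A, max (x k i - θ i) 0 = ∑ i ∈ A, (x k i - θ i) :=
      Finset.sum_congr rfl (fun i hi => max_eq_left (by
        rw [hmemA] at hi; linarith))
    rw [h1, h2]; ring
  -- flow cancellation
  have hanti : ∑ i ∈ A, ∑ l ∈ A, W i l * (Y l - Y i) = 0 := by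
    have h1 : ∑ i ∈ A, ∑ l ∈ A, W i l * Y l = ∑ i ∈ A, ∑ l ∈ A, W i l * Y i := by
      rw [Finset.sum_comm]
      exact Finset.sum_congr rfl (fun l _ => Finset.sum_congr rfl (fun i _ => by rw [hsymm]))
    have h2 : ∑ i ∈ A, ∑ l ∈ A, W i l * (Y l - Y i)
        = ∑ i ∈ A, ∑ l ∈ A, W i l * Y l - ∑ i ∈ A, ∑ l ∈ A, W i l * Y i := by
      rw [← Finset.sum_sub_distrib]
      exact Finset.sum_congr rfl (fun i _ => by
        rw [← Finset.sum_sub_distrib]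
        exact Finset.sum_congr rfl (fun l _ => by ring))
    rw [h2, h1]; ring
  have hswap : ∑ i ∈ Aᶜ, ∑ l ∈ A, W i l * (Y l - 1)
      = ∑ i ∈ A, ∑ l ∈ Aᶜ, W i l * (Y i - 1) := by
    rw [Finset.sum_comm]
    exact Finset.sum_congr rfl (fun i _ => Finset.sum_congr rfl (fun l _ => by rw [hsymm]))
  have hflow : ∑ i ∈ A, (x (k+1) i - x k i)
      = - ∑ i ∈ A, ∑ l ∈ Aᶜ, W i l * (1 - Y l) - ∑ i ∈ Aᶜ, ∑ l ∈ A, W i l * (Y l - 1) := by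
    have h1 : ∑ i ∈ A, (x (k+1) i - x k i) = ∑ i ∈ A, ∑ l, W i l * (Y l - Y i) :=
      Finset.sum_congr rfl (fun i _ => by rw [hstep i]; ring)
    have h2 : ∑ i ∈ A, ∑ l, W i l * (Y l - Y i)
        = ∑ i ∈ A, ∑ l ∈ A, W i l * (Y l - Y i) + ∑ i ∈ A, ∑ l ∈ Aᶜ, W i l * (Y l - Y i) := by
      rw [← Finset.sum_add_distrib]
      exact Finset.sum_congr rfl (fun i _ => (Finset.sum_add_sum_compl A _).symm)
    have h3 : ∑ i ∈ A, ∑ l ∈ Aᶜ, W i l * (Y l - Y i)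
        = - ∑ i ∈ A, ∑ l ∈ Aᶜ, W i l * (1 - Y l) - ∑ i ∈ A, ∑ l ∈ Aᶜ, W i l * (Y i - 1) := by
      have : ∀ i ∈ A, ∑ l ∈ Aᶜ, W i l * (Y l - Y i)
          = - ∑ l ∈ Aᶜ, W i l * (1 - Y l) - ∑ l ∈ Aᶜ, W i l * (Y i - 1) := by
        intro i _
        rw [← Finset.sum_neg_distrib, ← Finset.sum_sub_distrib]
        exact Finset.sum_congr rfl (fun l _ => by ring)
      rw [Finset.sum_congr rfl this, Finset.sum_sub_distrib, Finset.sum_neg_distrib]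
    rw [h1, h2, hanti, h3, hswap]; ring
  -- master inequality
  have hmaster : (∑ i, max (x (k+1) i - θ i) 0) + γ * E ≤ ∑ i, max (x k i - θ i) 0 := by
    have hsum1 : ∑ i, max (x (k+1) i - θ i) 0 + γ * E
        = (∑ i ∈ A, (max (x (k+1) i - θ i) 0 + γ * χ i))
          + (∑ i ∈ Aᶜ, (max (x (k+1) i - θ i) 0 + γ * χ i)) := by
      rw [Finset.sum_add_sum_compl A (fun i => max (x (k+1) i - θ i) 0 + γ * χ i)]
      rw [Finset.sum_add_distrib, ← Finset.mul_sum, hEdef]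
    have hs1 : ∑ i ∈ A, (max (x (k+1) i - θ i) 0 + γ * χ i)
        ≤ ∑ i ∈ A, ((x (k+1) i - x k i) + (x k i - θ i) + ∑ l ∈ Aᶜ, W i l * (1 - Y l)) :=
      Finset.sum_le_sum hb1
    have hs2 : ∑ i ∈ Aᶜ, (max (x (k+1) i - θ i) 0 + γ * χ i)
        ≤ ∑ i ∈ Aᶜ, ∑ l ∈ A, W i l * (Y l - 1) :=
      Finset.sum_le_sum hb2
    have hexp : ∑ i ∈ A, ((x (k+1) i - x k i) + (x k i - θ i) + ∑ l ∈ Aᶜ, W i l * (1 - Y l))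
        = ∑ i ∈ A, (x (k+1) i - x k i) + ∑ i ∈ A, (x k i - θ i)
          + ∑ i ∈ A, ∑ l ∈ Aᶜ, W i l * (1 - Y l) := by
      rw [← Finset.sum_add_distrib, ← Finset.sum_add_distrib]
    rw [hsum1, hΦ0]
    rw [hexp] at hs1
    rw [hflow] at hs1
    linarith [hs1, hs2]
  constructor
  · have := hmaster
    nlinarith [hEnn, hγ0]
  · intro i0 hcross
    have hE1 : 1 ≤ E := by
      have hχ1 : χ i0 = 1 := by
        by_cases hi0 : i0 ∈ A
        · rw [hmemA] at hi0
          have : ¬ θ i0 < x (k+1) i0 := fun hc => hcross ⟨fun _ => hc, fun _ => hi0⟩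
          simp only [hχdef, if_neg this, if_pos ((hmemA i0).mpr hi0)]
        · rw [hmemA] at hi0
          have : θ i0 < x (k+1) i0 := by
            by_contra hc
            exact hcross ⟨fun h => absurd h hi0, fun h => absurd h hc⟩
          simp only [hχdef, if_pos this, if_neg ((hmemA i0).not.mpr hi0)]
      calc (1:ℝ) = χ i0 := hχ1.symm
      _ ≤ E := Finset.single_le_sum (fun i _ => hχnn i) (mem_univ i0)
    nlinarith [hmaster, hE1, hγ0]

/-- Proposition 2: the upper sets `X4 ∪ X5 ∪ X6` empty in finite time. -/
theorem upper_sets_empty {n : ℕ} (hn : 1 < n)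
    (G : SimpleGraph (Fin n)) (hG : G.Connected)
    (W : Matrix (Fin n) (Fin n) ℝ) (hW : Assumption1 G W)
    (x : ℕ → Fin n → ℝ) (hx : Traj W x)
    (γ : ℝ) (hγ : GammaSetup W x γ) :
    ∃ K : ℕ, ∀ k, K ≤ k →
      ∀ i, x k i ≤ (mfun (Nat.zero_lt_one.trans hn) x k : ℝ) + 1 + alpha W γ i := by
  classical
  have h0 : 0 < n := Nat.zero_lt_one.trans hn
  obtain ⟨hsymm, hnn, hrow, hhalf, hnadj, hadj⟩ := hW
  have hγ0 : 0 < γ := hγ.1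
  have hw1 : ∀ i, W i i ≤ 1 := by
    intro i
    calc W i i ≤ ∑ j, W i j := Finset.single_le_sum (fun j _ => hnn i j) (mem_univ i)
    _ = 1 := hrow i
  have hw2 : ∀ i, 1/2 + 2*γ ≤ W i i := by
    intro i; have := (hγ.2 i 0).2.2.2; linarith
  obtain ⟨k1, p, hp, hper⟩ := exists_period h0 G W ⟨hsymm, hnn, hrow, hhalf, hnadj, hadj⟩ x hx
  have hq : ∀ q, k1 ≤ q → x (q + p) = x q := by
    intro q hkq
    obtain ⟨t, rfl⟩ := Nat.exists_eq_add_of_le hkq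
    exact hper t
  have hiter : ∀ s, x (k1 + s * p) = x k1 := by
    intro s
    induction s with
    | zero => simp
    | succ s ih =>
      have : k1 + (s+1) * p = (k1 + s * p) + p := by ring
      rw [this, hq (k1 + s * p) (by omega)]
      exact ih
  -- m is constant on the tail
  set ms : ℤ := mfun h0 x k1 with hmsdef
  have hm_eq : ∀ k, k1 ≤ k → mfun h0 x k = ms := by
    intro k hk
    have le1 : ms ≤ mfun h0 x k := mfun_mono h0 hnn hrow hx hk
    have le2 : mfun h0 x k ≤ ms := by
      have hk2 : k ≤ k1 + k * p := by
        have : k ≤ k * p := Nat.le_mul_of_pos_right k hp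
        omega
      have h3 : mfun h0 x (k1 + k * p) = ms := by
        rw [hmsdef]
        unfold mfun
        rw [hiter k]
      calc mfun h0 x k ≤ mfun h0 x (k1 + k * p) := mfun_mono h0 hnn hrow hx hk2
      _ = ms := h3
    omega
  set θ : Fin n → ℝ := fun i => (ms:ℝ) + 2 - W i i + γ with hθdef
  set Φ : ℕ → ℝ := fun k => ∑ i, max (x k i - θ i) 0 with hΦdef
  have hkey := fun k => keyStep W hsymm hnn hrow x hx γ hγ ms k
  have hΦmono : ∀ a b, a ≤ b → Φ b ≤ Φ a := by
    intro a b hab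
    induction b, hab using Nat.le_induction with
    | base => exact le_refl _
    | succ b hab ih => exact le_trans ((hkey b).1) ih
  have hΦconst : ∀ k, k1 ≤ k → Φ k = Φ k1 := by
    intro k hk
    have le1 : Φ k ≤ Φ k1 := hΦmono k1 k hk
    have hk2 : k ≤ k1 + k * p := by
      have : k ≤ k * p := Nat.le_mul_of_pos_right k hp
      omega
    have h3 : Φ (k1 + k * p) = Φ k1 := by
      simp only [hΦdef, hiter k]
    have le2 : Φ k1 ≤ Φ k := by
      rw [← h3]
      exact hΦmono k (k1 + k * p) hk2
    linarith
  have hnocross : ∀ k, k1 ≤ k → ∀ i, (θ i < x k i ↔ θ i < x (k+1) i) := by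
    intro k hk i
    by_contra hc
    have h4 := (hkey k).2 i hc
    have e1 := hΦconst k hk
    have e2 := hΦconst (k+1) (by omega)
    simp only [hΦdef] at e1 e2
    simp only [hθdef] at e1 e2 h4
    linarith
  have hAinv : ∀ k, k1 ≤ k → ∀ i, (θ i < x k i ↔ θ i < x k1 i) := by
    intro k hk
    induction k, hk using Nat.le_induction with
    | base => intro i; rfl
    | succ k hk ih =>
      intro i
      exact ((hnocross k hk i).symm).trans (ih i)
  -- the upper set at time k1 is empty
  have hAempty : ∀ i, ¬ (θ i < x k1 i) := by
    intro i0 hi0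
    set σ : Fin n → ℤ := fun i => ∑ t ∈ range p, ⌊x (k1+t) i⌋ with hσdef
    have hharm : ∀ i, ∑ j, W i j * ((σ j : ℝ)) = (σ i : ℝ) := by
      intro i
      have htel : ∑ t ∈ range p, (x (k1+t+1) i - x (k1+t) i) = 0 := by
        have := Finset.sum_range_sub (fun t => x (k1+t) i) p
        simp only [show ∀ t, k1 + (t+1) = k1 + t + 1 from fun t => by omega] at this
        rw [this, hq k1 le_rfl]
        ring
      have h1 : ∑ j, W i j * ((σ j:ℝ) - (σ i:ℝ)) = 0 := by
        calc ∑ j, W i j * ((σ j:ℝ) - (σ i:ℝ))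
            = ∑ j, ∑ t ∈ range p, W i j * ((⌊x (k1+t) j⌋:ℝ) - ⌊x (k1+t) i⌋) := by
              refine Finset.sum_congr rfl (fun j _ => ?_)
              rw [← Finset.mul_sum]
              congr 1
              rw [Finset.sum_sub_distrib]
              simp only [hσdef]
              push_cast
              ring
        _ = ∑ t ∈ range p, ∑ j, W i j * ((⌊x (k1+t) j⌋:ℝ) - ⌊x (k1+t) i⌋) := Finset.sum_comm
        _ = ∑ t ∈ range p, (x (k1+t+1) i - x (k1+t) i) := by
              refine Finset.sum_congr rfl (fun t _ => ?_)
              rw [step_identity hrow hx (k1+t) i]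
              ring
        _ = 0 := htel
      have h2 : ∑ j, W i j * ((σ j:ℝ) - (σ i:ℝ))
          = ∑ j, W i j * (σ j:ℝ) - (σ i:ℝ) := by
        have : ∑ j, W i j * ((σ j:ℝ) - (σ i:ℝ))
            = ∑ j, W i j * (σ j:ℝ) - ∑ j, W i j * (σ i:ℝ) := by
          rw [← Finset.sum_sub_distrib]
          exact Finset.sum_congr rfl (fun j _ => by ring)
        rw [this, ← Finset.sum_mul, hrow, one_mul]
      linarith [h1, h2]
    -- max principle
    have hne : (univ : Finset (Fin n)).Nonempty := ⟨⟨0, h0⟩, mem_univ _⟩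
    set T : ℤ := univ.sup' hne σ with hTdef
    have hTle : ∀ j, σ j ≤ T := fun j => Finset.le_sup' σ (mem_univ j)
    have hstepT : ∀ a b, σ a = T → G.Adj a b → σ b = T := by
      intro a b ha hab
      have hsum0 : ∑ j, W a j * ((T:ℝ) - (σ j:ℝ)) = 0 := by
        have hT1 : ∑ j, W a j * (T:ℝ) = (T:ℝ) := by
          rw [← Finset.sum_mul, hrow, one_mul]
        have h3 : ∑ j, W a j * ((T:ℝ) - (σ j:ℝ))
            = ∑ j, W a j * (T:ℝ) - ∑ j, W a j * (σ j:ℝ) := by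
          rw [← Finset.sum_sub_distrib]
          exact Finset.sum_congr rfl (fun j _ => by ring)
        rw [h3, hT1, hharm a, ha]
        ring
      have hterm := (Finset.sum_eq_zero_iff_of_nonneg
        (fun j _ => mul_nonneg (hnn a j)
          (by have := hTle j; have : ((σ j:ℤ):ℝ) ≤ ((T:ℤ):ℝ) := by exact_mod_cast this
              linarith))).mp hsum0 b (mem_univ b)
      have hWab : 0 < W a b := (hadj a b hab).2.1
      have : (T:ℝ) - (σ b:ℝ) = 0 := by
        rcases mul_eq_zero.mp hterm with h | h
        · exact absurd h (ne_of_gt hWab)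
        · exact h
      have h9 : ((σ b:ℤ):ℝ) = ((T:ℤ):ℝ) := by linarith
      exact_mod_cast h9
    have hwalk : ∀ {u v : Fin n}, G.Walk u v → σ u = T → σ v = T := by
      intro u v w
      induction w with
      | nil => exact id
      | cons h q ih => exact fun hu => ih (hstepT _ _ hu h)
    obtain ⟨a0, _, ha0⟩ := Finset.exists_mem_eq_sup' hne σ
    have hconst : ∀ b, σ b = T := by
      intro b
      obtain ⟨w⟩ := hG.preconnected a0 b
      exact hwalk w ha0.symm
    -- lower bound for σ i0
    have hflo : ∀ t, ms + 1 ≤ ⌊x (k1+t) i0⌋ := by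
      intro t
      have h5 : θ i0 < x (k1+t) i0 := (hAinv (k1+t) (by omega) i0).mpr hi0
      have h6 : (ms:ℝ) + 1 < x (k1+t) i0 := by
        have := hw1 i0
        simp only [hθdef] at h5
        linarith
      rw [Int.le_floor]; push_cast; linarith
    have hσi0 : (p:ℤ) * (ms + 1) ≤ σ i0 := by
      have h7 : ∑ t ∈ range p, (ms + 1) ≤ ∑ t ∈ range p, ⌊x (k1+t) i0⌋ :=
        Finset.sum_le_sum (fun t _ => hflo t)
      simp only [Finset.sum_const, Finset.card_range, smul_eq_mul] at h7
      exact h7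
    -- upper bound for σ j0
    obtain ⟨j0, _, hj0⟩ := Finset.exists_mem_eq_inf' ⟨⟨0, h0⟩, Finset.mem_univ _⟩
      (fun i => ⌊x k1 i⌋)
    have hj0f : ⌊x k1 j0⌋ = ms := hj0.symm
    have hj0A : ¬ (θ j0 < x k1 j0) := by
      intro hcon
      have h8 : x k1 j0 < (ms:ℝ) + 1 := by
        have := Int.lt_floor_add_one (x k1 j0)
        rw [hj0f] at this
        linarith
      have := hw1 j0
      simp only [hθdef] at hcon
      linarith
    have hfhi : ∀ t, ⌊x (k1+t) j0⌋ ≤ ms + 1 := by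
      intro t
      have h5 : ¬ (θ j0 < x (k1+t) j0) := fun hc => hj0A ((hAinv (k1+t) (by omega) j0).mp hc)
      push_neg at h5
      have h6 : x (k1+t) j0 < (ms:ℝ) + 2 := by
        have := hw2 j0
        simp only [hθdef] at h5
        linarith
      have : ⌊x (k1+t) j0⌋ < ms + 2 := by
        rw [Int.floor_lt]; push_cast; linarith
      omega
    obtain ⟨p', rfl⟩ : ∃ p', p = p' + 1 := ⟨p - 1, by omega⟩
    have hσj0 : σ j0 ≤ (p':ℤ) * (ms + 1) + ms := by
      have h9 : σ j0 = ∑ t ∈ range p', ⌊x (k1+(t+1)) j0⌋ + ⌊x (k1+0) j0⌋ := by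
        simp only [hσdef]
        exact Finset.sum_range_succ' (fun t => ⌊x (k1+t) j0⌋) p'
      have h10 : ∑ t ∈ range p', ⌊x (k1+(t+1)) j0⌋ ≤ ∑ t ∈ range p', (ms + 1) :=
        Finset.sum_le_sum (fun t _ => hfhi (t+1))
      rw [Finset.sum_const, Finset.card_range, nsmul_eq_mul] at h10
      have h11 : ⌊x (k1+0) j0⌋ = ms := by simpa using hj0f
      omega
    have hcontra : σ i0 = σ j0 := by rw [hconst i0, hconst j0]
    have hexp : ((p'+1 : ℕ):ℤ) * (ms + 1) = (p':ℤ) * (ms+1) + (ms+1) := by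
      push_cast; ring
    linarith [hσi0, hσj0, hcontra, hexp]
  -- conclusion
  refine ⟨k1, fun k hk i => ?_⟩
  have h1 : ¬ (θ i < x k i) := fun hc => hAempty i ((hAinv k hk i).mp hc)
  push_neg at h1
  have h2 : mfun h0 x k = ms := hm_eq k hk
  rw [alpha]
  have h3 : ((mfun (Nat.zero_lt_one.trans hn) x k : ℤ):ℝ) = (ms:ℝ) := by
    exact_mod_cast h2
  rw [h3]
  simp only [hθdef] at h1
  linarith
end
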